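/- arXiv:2411.02760 — 10 statements merged into one kernel-verified Lean document; each statement's English description precedes it below -/
import Mathlib

section
/- Let Δ and Λ be distance value sets with inf Δ = 0 and inf Λ = 0. Then the following are equivalent: (1) Δ and Λ are equivalent; (2) there exists a positive real number α such that Λ = α·Δ = {α·x : x ∈ Δ}. Moreover, if Δ and Λ are equivalent, then every witness f of their equivalence has the form f(x) = α·x for a single positive real number α. -/
/-- A distance value set: a set of positive reals closed under
`(x, y) ↦ min (x + y) (sup Δ)` (which is just `x + y` when `Δ` is unbounded). -/
def IsDVS (Δ : Set ℝ) : Prop :=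
  (∀ x ∈ Δ, 0 < x) ∧
  ∀ x ∈ Δ, ∀ y ∈ Δ,
    (BddAbove Δ → min (x + y) (sSup Δ) ∈ Δ) ∧ (¬ BddAbove Δ → x + y ∈ Δ)

/-- `(x, y, z)` is a `Δ`-triangle. -/
def IsTriangle (Δ : Set ℝ) (x y z : ℝ) : Prop :=
  x ∈ Δ ∧ y ∈ Δ ∧ z ∈ Δ ∧ |x - y| ≤ z ∧ z ≤ x + y

/-- `f` witnesses the equivalence of the distance value sets `Δ` and `Λ`:
it is a bijection of `Δ` onto `Λ` preserving triangles in both directions. -/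
def IsEquivWitness (Δ Λ : Set ℝ) (f : ℝ → ℝ) : Prop :=
  Set.BijOn f Δ Λ ∧
  ∀ x ∈ Δ, ∀ y ∈ Δ, ∀ z ∈ Δ,
    (IsTriangle Δ x y z ↔ IsTriangle Λ (f x) (f y) (f z))

/-- Equivalence of distance value sets. -/
def DVSEquiv (Δ Λ : Set ℝ) : Prop := ∃ f : ℝ → ℝ, IsEquivWitness Δ Λ f

-- small elements
lemma dvs_small {Δ : Set ℝ} (hne : Δ.Nonempty) (h0 : sInf Δ = 0) :
    ∀ η : ℝ, 0 < η → ∃ ε ∈ Δ, ε < η := by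
  intro η hη
  exact exists_lt_of_csInf_lt hne (by rw [h0]; exact hη)

-- density lemma
lemma dvs_dense {Δ : Set ℝ} (hΔ : IsDVS Δ) {ε : ℝ} (hε : ε ∈ Δ) :
    ∀ u : ℝ, 0 ≤ u → (∃ w ∈ Δ, u < w) → ∃ c ∈ Δ, u < c ∧ c ≤ u + ε := by
  have hεpos : 0 < ε := hΔ.1 ε hε
  intro u hu hw
  obtain ⟨n, hn⟩ := exists_nat_gt (u / ε)
  have hn' : u < n * ε := by
    rw [← div_lt_iff₀ hεpos] at *; exact hn
  clear hn
  induction n generalizing u with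
  | zero => simp at hn'; linarith
  | succ n ih =>
    by_cases hcase : u < ε
    · exact ⟨ε, hε, hcase, by linarith⟩
    · push_neg at hcase
      obtain ⟨w, hwΔ, hww⟩ := hw
      obtain ⟨c', hc', hc'1, hc'2⟩ := ih (u - ε) (by linarith)
        ⟨w, hwΔ, by linarith [hΔ.1 ε hε]⟩ (by push_cast; push_cast at hn'; linarith)
      by_cases hbdd : BddAbove Δ
      · have hmem := (hΔ.2 c' hc' ε hε).1 hbdd
        by_cases hle : c' + ε ≤ sSup Δ
        · rw [min_eq_left hle] at hmem
          exact ⟨c' + ε, hmem, by linarith, by linarith⟩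
        · push_neg at hle
          rw [min_eq_right (le_of_lt hle)] at hmem
          have h1 : w ≤ sSup Δ := le_csSup hbdd hwΔ
          exact ⟨sSup Δ, hmem, by linarith, by linarith⟩
      · have hmem := (hΔ.2 c' hc' ε hε).2 hbdd
        exact ⟨c' + ε, hmem, by linarith, by linarith⟩

-- symmetry of witness
lemma witness_symm {Δ Λ : Set ℝ} {f : ℝ → ℝ} (hf : IsEquivWitness Δ Λ f) :
    ∃ g : ℝ → ℝ, IsEquivWitness Λ Δ g ∧ ∀ x ∈ Δ, g (f x) = x := by
  obtain ⟨hbij, htri⟩ := hf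
  set g := Function.invFunOn f Δ with hg
  have hinv : Set.InvOn g f Δ Λ := hbij.invOn_invFunOn
  have hbij' : Set.BijOn g Λ Δ := Set.BijOn.symm hinv.symm hbij
  refine ⟨g, ⟨hbij', ?_⟩, fun x hx => hinv.1 hx⟩
  intro u hu v hv w hw
  have h1 : f (g u) = u := hinv.2 hu
  have h2 : f (g v) = v := hinv.2 hv
  have h3 : f (g w) = w := hinv.2 hw
  have := htri (g u) (hbij'.mapsTo hu) (g v) (hbij'.mapsTo hv) (g w) (hbij'.mapsTo hw)
  rw [h1, h2, h3] at this
  exact this.symm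

-- bundle of hypotheses
structure DVSGood (Δ Λ : Set ℝ) (f : ℝ → ℝ) : Prop where
  dvs1 : IsDVS Δ
  dvs2 : IsDVS Λ
  inf1 : sInf Δ = 0
  inf2 : sInf Λ = 0
  wit : IsEquivWitness Δ Λ f
  ne1 : Δ.Nonempty

namespace DVSGood

variable {Δ Λ : Set ℝ} {f : ℝ → ℝ}

lemma pos1 (h : DVSGood Δ Λ f) : ∀ x ∈ Δ, 0 < x := h.dvs1.1
lemma pos2 (h : DVSGood Δ Λ f) : ∀ x ∈ Λ, 0 < x := h.dvs2.1
lemma mem2 (h : DVSGood Δ Λ f) : ∀ x ∈ Δ, f x ∈ Λ := fun x hx => h.wit.1.mapsTo hx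
lemma ne2 (h : DVSGood Δ Λ f) : Λ.Nonempty := by
  obtain ⟨x, hx⟩ := h.ne1; exact ⟨f x, h.mem2 x hx⟩

lemma mono (h : DVSGood Δ Λ f) : ∀ x ∈ Δ, ∀ y ∈ Δ, x < y → f x < f y := by
  intro x hx y hy hxy
  obtain ⟨ε, hε, hεlt⟩ := dvs_small h.ne1 h.inf1 ((y - x)/2) (by linarith)
  have hxpos := h.pos1 x hx
  have hypos := h.pos1 y hy
  obtain ⟨c, hc, hc1, hc2⟩ := dvs_dense h.dvs1 hε (x/2) (by linarith) ⟨x, hx, by linarith⟩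
  have htx : IsTriangle Δ c c x :=
    ⟨hc, hc, hx, by rw [sub_self, abs_zero]; linarith, by linarith⟩
  have hty : ¬ IsTriangle Δ c c y := by
    intro ⟨_, _, _, _, hbad⟩; linarith
  have htx' := (h.wit.2 c hc c hc x hx).1 htx
  have hty' : ¬ IsTriangle Λ (f c) (f c) (f y) := fun hh => hty ((h.wit.2 c hc c hc y hy).2 hh)
  have h1 : f x ≤ f c + f c := htx'.2.2.2.2
  have h2 : f c + f c < f y := by
    by_contra hcon
    push_neg at hcon
    exact hty' ⟨h.mem2 c hc, h.mem2 c hc, h.mem2 y hy,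
      by rw [sub_self, abs_zero]; exact le_of_lt (h.pos2 (f y) (h.mem2 y hy)), hcon⟩
  linarith

/-- key addition preservation, forward -/
lemma addle (h : DVSGood Δ Λ f) : ∀ x ∈ Δ, ∀ y ∈ Δ, ∀ z ∈ Δ, z ≤ x + y → f z ≤ f x + f y := by
  intro x hx y hy z hz hzle
  by_cases habs : |x - y| ≤ z
  · have ht : IsTriangle Δ x y z := ⟨hx, hy, hz, habs, hzle⟩
    exact ((h.wit.2 x hx y hy z hz).1 ht).2.2.2.2
  · push_neg at habs
    rcases abs_cases (x - y) with ⟨he, _⟩ | ⟨he, _⟩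
    · have : z < x := by rw [he] at habs; linarith [h.pos1 y hy]
      linarith [h.mono z hz x hx this, h.pos2 (f y) (h.mem2 y hy)]
    · have : z < y := by rw [he] at habs; linarith [h.pos1 x hx]
      linarith [h.mono z hz y hy this, h.pos2 (f x) (h.mem2 x hx)]

lemma addgt (h : DVSGood Δ Λ f) : ∀ x ∈ Δ, ∀ y ∈ Δ, ∀ z ∈ Δ, x + y < z → f x + f y < f z := by
  intro x hx y hy z hz hzgt
  have hnt : ¬ IsTriangle Δ x y z := fun ⟨_, _, _, _, hbad⟩ => by linarith
  have hnt' : ¬ IsTriangle Λ (f x) (f y) (f z) :=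
    fun hh => hnt ((h.wit.2 x hx y hy z hz).2 hh)
  have h1 : f x < f z := h.mono x hx z hz (by linarith [h.pos1 y hy])
  have h2 : f y < f z := h.mono y hy z hz (by linarith [h.pos1 x hx])
  by_contra hcon
  push_neg at hcon
  exact hnt' ⟨h.mem2 x hx, h.mem2 y hy, h.mem2 z hz, abs_sub_lt_iff.2 ⟨by linarith, by linarith⟩ |>.le, hcon⟩

lemma cont (h : DVSGood Δ Λ f) : ∀ η : ℝ, 0 < η → ∃ θ : ℝ, 0 < θ ∧ ∀ d ∈ Δ, d < θ → f d < η := by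
  intro η hη
  obtain ⟨lam, hlam, hlt⟩ := dvs_small h.ne2 h.inf2 η hη
  obtain ⟨w, hw, hfw⟩ := h.wit.1.surjOn hlam
  refine ⟨w, h.pos1 w hw, fun d hd hdw => ?_⟩
  calc f d < f w := h.mono d hd w hw hdw
    _ < η := by rw [hfw]; exact hlt

end DVSGood

namespace DVSGood

variable {Δ Λ : Set ℝ} {f : ℝ → ℝ}

lemma chain (h : DVSGood Δ Λ f) {ε δ e : ℝ} (hε : ε ∈ Δ) (hδ : δ ∈ Δ) (he : e ∈ Δ)
    (hlt : ε + 2*δ < e) :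
    ∀ n : ℕ, ∀ z ∈ Δ, z ≤ ((n:ℝ)+1)*ε + ((n:ℝ)+1)*δ → f z ≤ ((n:ℝ)+1) * f e := by
  have hεp := h.pos1 ε hε
  have hδp := h.pos1 δ hδ
  have hfe : 0 < f e := h.pos2 _ (h.mem2 e he)
  intro n
  induction n with
  | zero =>
    intro z hz hzle
    push_cast at hzle ⊢
    have : z < e := by linarith
    linarith [h.mono z hz e he this]
  | succ n ih =>
    intro z hz hzle
    have hn0 : (0:ℝ) ≤ (n:ℝ) := Nat.cast_nonneg n
    push_cast at hzle
    by_cases hcase : ∃ w ∈ Δ, ((n:ℝ)+1)*ε + (n:ℝ)*δ < w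
    · obtain ⟨c, hc, hc1, hc2⟩ := dvs_dense h.dvs1 hδ (((n:ℝ)+1)*ε + (n:ℝ)*δ)
        (by nlinarith) hcase
      have hcle := ih c hc (by linarith)
      have hzce : z ≤ c + e := by linarith
      have := h.addle c hc e he z hz hzce
      push_cast
      linarith
    · push_neg at hcase
      have hz' : z ≤ ((n:ℝ)+1)*ε + ((n:ℝ)+1)*δ := le_trans (hcase z hz) (by nlinarith)
      have := ih z hz hz'
      push_cast
      linarith

lemma usum (h : DVSGood Δ Λ f) :
    ∀ n : ℕ, ∀ ε ∈ Δ, ∀ z ∈ Δ, ∀ η : ℝ, 0 < η → z ≤ ((n:ℝ)+1)*ε →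
      f z ≤ ((n:ℝ)+1) * f ε + η := by
  intro n ε hε z hz η hη hzle
  have hεp := h.pos1 ε hε
  have hn0 : (0:ℝ) ≤ (n:ℝ) := Nat.cast_nonneg n
  have hn1 : (0:ℝ) < (n:ℝ)+1 := by linarith
  have hηn : 0 < η/((n:ℝ)+1) := by positivity
  obtain ⟨θ, hθ, hcont⟩ := h.cont (η/((n:ℝ)+1)) hηn
  obtain ⟨δ, hδ, hδlt⟩ := dvs_small h.ne1 h.inf1 (min (θ/4) (ε/4)) (by positivity)
  have hδθ : δ < θ/4 := lt_of_lt_of_le hδlt (min_le_left _ _)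
  have hδε : δ < ε/4 := lt_of_lt_of_le hδlt (min_le_right _ _)
  have hδp := h.pos1 δ hδ
  obtain ⟨d, hd, hd1, hd2⟩ := dvs_dense h.dvs1 hδ (3*δ) (by linarith) ⟨ε, hε, by linarith⟩
  have hfd : f d < η/((n:ℝ)+1) := hcont d hd (by linarith)
  have hfε : 0 < f ε := h.pos2 _ (h.mem2 ε hε)
  by_cases hcase : ∃ w ∈ Δ, ε + 2*δ < w
  · obtain ⟨e, he, he1, he2⟩ := dvs_dense h.dvs1 hδ (ε + 2*δ) (by linarith) hcase
    have hch := h.chain hε hδ he he1 n z hz (by nlinarith)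
    have hed : f e ≤ f ε + f d := h.addle ε hε d hd e he (by linarith)
    have hd3 : ((n:ℝ)+1) * f d ≤ η := by
      have := mul_le_mul_of_nonneg_left hfd.le hn1.le
      rwa [mul_div_cancel₀ η hn1.ne'] at this
    calc f z ≤ ((n:ℝ)+1) * f e := hch
      _ ≤ ((n:ℝ)+1) * (f ε + f d) := by nlinarith
      _ = ((n:ℝ)+1) * f ε + ((n:ℝ)+1) * f d := by ring
      _ ≤ ((n:ℝ)+1) * f ε + η := by linarith
  · push_neg at hcase
    have hzd : z ≤ ε + d := le_trans (hcase z hz) (by linarith)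
    have h1 := h.addle ε hε d hd z hz hzd
    have hd3 : f d ≤ η := by
      have h2 : η/((n:ℝ)+1) ≤ η := by
        rw [div_le_iff₀ hn1]; nlinarith
      linarith
    nlinarith

lemma ule (h : DVSGood Δ Λ f) (n : ℕ) {ε z : ℝ} (hε : ε ∈ Δ) (hz : z ∈ Δ)
    (hle : z ≤ ((n:ℝ)+1)*ε) : f z ≤ ((n:ℝ)+1) * f ε :=
  le_of_forall_pos_le_add fun η hη => h.usum n ε hε z hz η hη hle

lemma symm (h : DVSGood Δ Λ f) :
    ∃ g : ℝ → ℝ, DVSGood Λ Δ g ∧ ∀ x ∈ Δ, g (f x) = x := by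
  obtain ⟨g, hg, hgf⟩ := witness_symm h.wit
  exact ⟨g, ⟨h.dvs2, h.dvs1, h.inf2, h.inf1, hg, h.ne2⟩, hgf⟩

lemma scale (h : DVSGood Δ Λ f) (n : ℕ) {ε z : ℝ} (hε : ε ∈ Δ) (hz : z ∈ Δ) :
    z ≤ ((n:ℝ)+1)*ε ↔ f z ≤ ((n:ℝ)+1) * f ε := by
  refine ⟨h.ule n hε hz, fun hle => ?_⟩
  obtain ⟨g, hg, hgf⟩ := h.symm
  have := hg.ule n (h.mem2 ε hε) (h.mem2 z hz) hle
  rwa [hgf z hz, hgf ε hε] at this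

end DVSGood

namespace DVSGood

variable {Δ Λ : Set ℝ} {f : ℝ → ℝ}

lemma ratio (h : DVSGood Δ Λ f) : ∀ x ∈ Δ, ∀ y ∈ Δ, f x * y ≤ f y * x := by
  intro x hx y hy
  have hx0 := h.pos1 x hx
  have hy0 := h.pos1 y hy
  have hfy0 : 0 < f y := h.pos2 _ (h.mem2 y hy)
  refine le_of_forall_pos_le_add fun η hη => ?_
  have hc0 : (0:ℝ) < 2*x + y + 1 := by linarith
  obtain ⟨θ, hθ, hcont⟩ := h.cont (η/(2*x+y+1)) (by positivity)
  obtain ⟨ε, hε, hεlt⟩ := dvs_small h.ne1 h.inf1 (min (min x y) (min θ 1)) (by positivity)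
  have hεx : ε < x := lt_of_lt_of_le hεlt (le_trans (min_le_left _ _) (min_le_left _ _))
  have hεy : ε < y := lt_of_lt_of_le hεlt (le_trans (min_le_left _ _) (min_le_right _ _))
  have hεθ : ε < θ := lt_of_lt_of_le hεlt (le_trans (min_le_right _ _) (min_le_left _ _))
  have hε1 : ε < 1 := lt_of_lt_of_le hεlt (le_trans (min_le_right _ _) (min_le_right _ _))
  have hεp := h.pos1 ε hε
  have hfε : 0 < f ε := h.pos2 _ (h.mem2 ε hε)
  set a := ⌊x/ε⌋₊ with ha
  set b := ⌊y/ε⌋₊ with hb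
  have hax : (a:ℝ)*ε ≤ x := by
    have := Nat.floor_le (show (0:ℝ) ≤ x/ε by positivity)
    calc (a:ℝ)*ε ≤ (x/ε)*ε := by apply mul_le_mul_of_nonneg_right this hεp.le
      _ = x := by field_simp
  have hax2 : x ≤ ((a:ℝ)+1)*ε := by
    have := Nat.lt_floor_add_one (x/ε)
    have h2 : x/ε * ε ≤ ((a:ℝ)+1)*ε := mul_le_mul_of_nonneg_right this.le hεp.le
    calc x = x/ε*ε := by field_simp
      _ ≤ _ := h2
  have hby : (b:ℝ)*ε ≤ y := by
    have := Nat.floor_le (show (0:ℝ) ≤ y/ε by positivity)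
    calc (b:ℝ)*ε ≤ (y/ε)*ε := by apply mul_le_mul_of_nonneg_right this hεp.le
      _ = y := by field_simp
  have hby2 : y ≤ ((b:ℝ)+1)*ε := by
    have := Nat.lt_floor_add_one (y/ε)
    have h2 : y/ε * ε ≤ ((b:ℝ)+1)*ε := mul_le_mul_of_nonneg_right this.le hεp.le
    calc y = y/ε*ε := by field_simp
      _ ≤ _ := h2
  have hb1 : 1 ≤ b := by
    rw [hb]
    exact Nat.le_floor (by rw [Nat.cast_one, le_div_iff₀ hεp]; linarith)
  -- (5)
  have h5 : f x ≤ ((a:ℝ)+1) * f ε := (h.scale a hε hx).1 hax2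
  -- (8)
  have h8 : ((b:ℝ)-1) * f ε ≤ f y := by
    rcases Nat.lt_or_ge b 2 with hblt | hbge
    · have hbeq : b = 1 := by omega
      rw [hbeq]; push_cast; simpa using hfy0.le
    · have hcast : ((b:ℝ)-1) = ((b-2:ℕ):ℝ)+1 := by
        push_cast [Nat.cast_sub hbge]; ring
      by_contra hcon
      push_neg at hcon
      have := (h.scale (b-2) hε hy).2 (by rw [← hcast]; exact hcon.le)
      rw [← hcast] at this
      -- y ≤ (b-1)ε but bε ≤ y
      have hb1' : (1:ℝ) ≤ (b:ℝ) := by exact_mod_cast hb1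
      nlinarith
  -- assemble
  have ha0 : (0:ℝ) ≤ (a:ℝ) := Nat.cast_nonneg a
  have hb1' : (1:ℝ) ≤ (b:ℝ) := by exact_mod_cast hb1
  have e1 : f x * y ≤ (((a:ℝ)+1)*f ε) * (((b:ℝ)+1)*ε) := by
    apply mul_le_mul h5 hby2 hy0.le (by positivity)
  have e2 : (((b:ℝ)-1)*f ε) * ((a:ℝ)*ε) ≤ f y * x := by
    apply mul_le_mul h8 hax (by positivity) hfy0.le
  have e5 : (2*((a:ℝ)*ε) + (b:ℝ)*ε + ε) * f ε ≤ (2*x + y + 1) * f ε := by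
    apply mul_le_mul_of_nonneg_right _ hfε.le
    linarith
  have e6 : (2*x+y+1) * f ε ≤ (2*x+y+1) * (η/(2*x+y+1)) := by
    apply mul_le_mul_of_nonneg_left (hcont ε hε hεθ).le hc0.le
  have e7 : (2*x+y+1) * (η/(2*x+y+1)) = η := mul_div_cancel₀ η hc0.ne'
  nlinarith
  
lemma linear (h : DVSGood Δ Λ f) : ∃ α : ℝ, 0 < α ∧ ∀ x ∈ Δ, f x = α * x := by
  obtain ⟨x₀, hx₀⟩ := h.ne1
  have hx₀p := h.pos1 x₀ hx₀
  have hfx₀p : 0 < f x₀ := h.pos2 _ (h.mem2 x₀ hx₀)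
  refine ⟨f x₀ / x₀, by positivity, fun x hx => ?_⟩
  have h1 := h.ratio x hx x₀ hx₀
  have h2 := h.ratio x₀ hx₀ x hx
  have heq : f x * x₀ = f x₀ * x := le_antisymm h1 h2
  field_simp
  linarith

end DVSGood


/-- Two distance value sets with infimum `0` are equivalent iff one is a positive
multiple of the other; moreover every witness of the equivalence is multiplication
by a single positive real number. -/
theorem dvs_equiv_iff_scalar_multiple (Δ Λ : Set ℝ) (hΔ : IsDVS Δ) (hΛ : IsDVS Λ)
    (hΔ0 : sInf Δ = 0) (hΛ0 : sInf Λ = 0) :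
    (DVSEquiv Δ Λ ↔ ∃ α : ℝ, 0 < α ∧ Λ = (fun x => α * x) '' Δ) ∧
    (∀ f : ℝ → ℝ, IsEquivWitness Δ Λ f →
      ∃ α : ℝ, 0 < α ∧ ∀ x ∈ Δ, f x = α * x) := by
  constructor
  · constructor
    · rintro ⟨f, hf⟩
      by_cases hne : Δ.Nonempty
      · obtain ⟨α, hα, hlin⟩ := (DVSGood.mk hΔ hΛ hΔ0 hΛ0 hf hne).linear
        refine ⟨α, hα, ?_⟩
        rw [← hf.1.image_eq]
        exact Set.image_congr hlin
      · rw [Set.not_nonempty_iff_eq_empty] at hne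
        subst hne
        have hΛe : Λ = ∅ := by
          have h1 := hf.1.surjOn
          simpa [Set.subset_empty_iff] using h1
        exact ⟨1, one_pos, by simp [hΛe]⟩
    · rintro ⟨α, hα, hΛeq⟩
      refine ⟨fun x => α * x, ?_, ?_⟩
      · rw [hΛeq]
        exact Set.InjOn.bijOn_image fun p _ q _ hpq => mul_left_cancel₀ hα.ne' hpq
      · intro x hx y hy z hz
        constructor
        · rintro ⟨_, _, _, h4, h5⟩
          refine ⟨by rw [hΛeq]; exact ⟨x, hx, rfl⟩, by rw [hΛeq]; exact ⟨y, hy, rfl⟩,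
            by rw [hΛeq]; exact ⟨z, hz, rfl⟩, ?_, ?_⟩
          · show |α * x - α * y| ≤ α * z
            rw [← mul_sub, abs_mul, abs_of_pos hα]
            exact mul_le_mul_of_nonneg_left h4 hα.le
          · show α * z ≤ α * x + α * y
            rw [← mul_add]
            exact mul_le_mul_of_nonneg_left h5 hα.le
        · rintro ⟨_, _, _, h4, h5⟩
          refine ⟨hx, hy, hz, ?_, ?_⟩
          · have h4' : |α * x - α * y| ≤ α * z := h4
            rw [← mul_sub, abs_mul, abs_of_pos hα] at h4'
            exact le_of_mul_le_mul_left h4' hα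
          · have h5' : α * z ≤ α * x + α * y := h5
            rw [← mul_add] at h5'
            exact le_of_mul_le_mul_left h5' hα
  · intro f hf
    by_cases hne : Δ.Nonempty
    · exact (DVSGood.mk hΔ hΛ hΔ0 hΛ0 hf hne).linear
    · exact ⟨1, one_pos, fun x hx => absurd ⟨x, hx⟩ hne⟩
end

section
/- Let α and β be positive irrational numbers. Then Δ_α and Δ_β are equivalent distance value sets if and only if α and β are E^{IR}_{GL₂(ℚ)}-equivalent, i.e., if and only if there exist rationals a, b, c, d with ad − bc ≠ 0 such that β = (aα + b)/(cα + d). -/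
/-- `Δ_α = {pα + q : p, q ∈ ℚ} ∩ (0, +∞)`. -/
def Dset (α : ℝ) : Set ℝ := {x | (∃ p q : ℚ, x = (p : ℝ) * α + (q : ℝ)) ∧ 0 < x}

/-- `α` and `β` are `E^{IR}_{GL₂(ℚ)}`-equivalent: `β` is the image of `α` under a
linear fractional transformation with invertible rational coefficient matrix. -/
def EGL2Q (α β : ℝ) : Prop :=
  ∃ a b c d : ℚ, a * d - b * c ≠ 0 ∧ β = ((a : ℝ) * α + b) / ((c : ℝ) * α + d)

lemma aux_rat_mem_Dset (α : ℝ) {q : ℚ} (hq : 0 < q) : (q:ℝ) ∈ Dset α :=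
  ⟨⟨0, q, by push_cast; ring⟩, by exact_mod_cast hq⟩

lemma aux_Dset_pos {α x : ℝ} (hx : x ∈ Dset α) : 0 < x := hx.2

lemma aux_Dset_add {α x y : ℝ} (hx : x ∈ Dset α) (hy : y ∈ Dset α) : x + y ∈ Dset α := by
  obtain ⟨⟨p, q, hpq⟩, hx0⟩ := hx
  obtain ⟨⟨p', q', hpq'⟩, hy0⟩ := hy
  exact ⟨⟨p + p', q + q', by push_cast; rw [hpq, hpq']; ring⟩, by linarith⟩

lemma aux_Dset_ratsmul {α x : ℝ} (hx : x ∈ Dset α) {r : ℚ} (hr : 0 < r) :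
    (r:ℝ) * x ∈ Dset α := by
  obtain ⟨⟨p, q, hpq⟩, hx0⟩ := hx
  refine ⟨⟨r * p, r * q, by push_cast; rw [hpq]; ring⟩, ?_⟩
  have : (0:ℝ) < r := by exact_mod_cast hr
  positivity

lemma aux_Dset_natmul {α x : ℝ} (hx : x ∈ Dset α) {n : ℕ} (hn : 0 < n) :
    (n:ℝ) * x ∈ Dset α := by
  have h := aux_Dset_ratsmul hx (r := (n:ℚ)) (by exact_mod_cast hn)
  simpa using h

lemma aux_irr_lin {α : ℝ} (h : Irrational α) {c d : ℚ} (hcd : (c:ℝ) * α + d = 0) :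
    c = 0 ∧ d = 0 := by
  rcases eq_or_ne c 0 with hc | hc
  · refine ⟨hc, ?_⟩
    rw [hc] at hcd
    simp at hcd
    exact_mod_cast hcd
  · exfalso
    have hcR : (c:ℝ) ≠ 0 := by exact_mod_cast hc
    have : α = ((-d / c : ℚ) : ℝ) := by
      push_cast
      field_simp
      linarith [hcd]
    exact h ⟨-d / c, this.symm⟩

lemma aux_forward (α β : ℝ) (hα : 0 < α) (hαirr : Irrational α)
    (h : DVSEquiv (Dset α) (Dset β)) : EGL2Q α β := by
  obtain ⟨f, hbij, htri⟩ := h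
  have hmapsto := hbij.mapsTo
  have hsurj := hbij.surjOn
  have hinj := hbij.injOn
  have hΔ1 : (1:ℝ) ∈ Dset α := ⟨⟨0, 1, by norm_num⟩, one_pos⟩
  have hΔα : α ∈ Dset α := ⟨⟨1, 0, by norm_num⟩, hα⟩
  have hfpos : ∀ x ∈ Dset α, 0 < f x := fun x hx => (hmapsto hx).2
  -- monotonicity
  have hmono : ∀ x ∈ Dset α, ∀ y ∈ Dset α, x ≤ y → f x ≤ f y := by
    intro x hx y hy hxy
    by_contra hcon
    push_neg at hcon
    obtain ⟨q, hq1, hq2⟩ := exists_rat_btwn (by linarith : 2 * f y < 2 * f x)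
    have hq0 : (0:ℝ) < q := lt_trans (by linarith [hfpos y hy]) hq1
    have hqΛ : (q:ℝ) ∈ Dset β := aux_rat_mem_Dset β (by exact_mod_cast hq0)
    obtain ⟨z, hz, hfz⟩ := hsurj hqΛ
    have h1 : IsTriangle (Dset β) (f x) (f x) (f z) := by
      refine ⟨hmapsto hx, hmapsto hx, hmapsto hz, ?_, ?_⟩
      · rw [hfz]; simpa using hq0.le
      · rw [hfz]; linarith
    have h2 : IsTriangle (Dset α) x x z := (htri x hx x hx z hz).2 h1
    have h3 : ¬ IsTriangle (Dset α) y y z := by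
      intro ht
      have := ((htri y hy y hy z hz).1 ht).2.2.2.2
      rw [hfz] at this
      linarith
    have h4 : y + y < z := by
      by_contra h4
      push_neg at h4
      exact h3 ⟨hy, hy, hz, by simpa using (aux_Dset_pos hz).le, h4⟩
    have h5 : z ≤ x + x := h2.2.2.2.2
    linarith
  have hsmono : ∀ x ∈ Dset α, ∀ y ∈ Dset α, x < y → f x < f y := by
    intro x hx y hy hxy
    rcases lt_or_eq_of_le (hmono x hx y hy hxy.le) with h | h
    · exact h
    · exact absurd (hinj hx hy h) hxy.ne
  -- additivity
  have hadd : ∀ x ∈ Dset α, ∀ y ∈ Dset α, f (x + y) = f x + f y := by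
    intro x hx y hy
    have hxy : x + y ∈ Dset α := aux_Dset_add hx hy
    have ht : IsTriangle (Dset α) x y (x + y) := by
      refine ⟨hx, hy, hxy, ?_, le_refl _⟩
      rw [abs_sub_le_iff]
      constructor <;> linarith [aux_Dset_pos hx, aux_Dset_pos hy]
    obtain ⟨_, _, _, hlow, hup⟩ := (htri x hx y hy _ hxy).1 ht
    rcases eq_or_lt_of_le hup with h | h
    · exact h
    obtain ⟨q, hq1, hq2⟩ := exists_rat_btwn h
    have hq0 : (0:ℝ) < q := lt_trans (hfpos _ hxy) hq1
    obtain ⟨z, hz, hfz⟩ := hsurj (aux_rat_mem_Dset β (q := q) (by exact_mod_cast hq0))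
    have h1 : IsTriangle (Dset β) (f x) (f y) (f z) := by
      refine ⟨hmapsto hx, hmapsto hy, hmapsto hz, ?_, ?_⟩
      · rw [hfz]; linarith
      · rw [hfz]; linarith
    have h2 := ((htri x hx y hy z hz).2 h1).2.2.2.2
    have h3 : f z ≤ f (x + y) := hmono z hz _ hxy h2
    rw [hfz] at h3
    linarith
  -- natural multiples
  have hnat : ∀ n : ℕ, 0 < n → ∀ x ∈ Dset α, f ((n:ℝ) * x) = (n:ℝ) * f x := by
    intro n
    induction n with
    | zero => intro h; exact absurd h (lt_irrefl 0)
    | succ n ih =>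
      intro _ x hx
      rcases Nat.eq_zero_or_pos n with h0 | h0
      · subst h0; simp
      · have hnx : (n:ℝ) * x ∈ Dset α := aux_Dset_natmul hx h0
        have e : ((n + 1 : ℕ):ℝ) * x = (n:ℝ) * x + x := by push_cast; ring
        rw [e, hadd _ hnx x hx, ih h0 x hx]
        push_cast; ring
  -- rational multiples
  have hrat : ∀ r : ℚ, 0 < r → ∀ x ∈ Dset α, f ((r:ℝ) * x) = (r:ℝ) * f x := by
    intro r hr x hx
    have hrx : (r:ℝ) * x ∈ Dset α := aux_Dset_ratsmul hx hr
    have hden : 0 < r.den := r.pos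
    have hnum : 0 < r.num := Rat.num_pos.mpr hr
    have hnum' : 0 < r.num.toNat := by omega
    have hr1 : (r.den:ℝ) * (r:ℝ) = (r.num:ℝ) := by
      rw [Rat.cast_def]
      field_simp
    have e1 : f ((r.den:ℝ) * ((r:ℝ) * x)) = (r.den:ℝ) * f ((r:ℝ) * x) :=
      hnat r.den hden _ hrx
    have e4 : (r.num.toNat:ℝ) = (r.num:ℝ) := by
      exact_mod_cast Int.toNat_of_nonneg hnum.le
    have e2 : (r.den:ℝ) * ((r:ℝ) * x) = (r.num.toNat:ℝ) * x := by
      rw [← mul_assoc, hr1, e4]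
    have e3 : f ((r.num.toNat:ℝ) * x) = (r.num.toNat:ℝ) * f x := hnat _ hnum' x hx
    rw [e2, e3, e4] at e1
    have hdenR : (r.den:ℝ) ≠ 0 := by positivity
    apply mul_left_cancel₀ hdenR
    rw [← e1, ← mul_assoc, hr1]
  -- linearity
  have hlin : ∀ x ∈ Dset α, ∀ y ∈ Dset α, f y * x = y * f x := by
    intro x hx y hy
    have hx0 := aux_Dset_pos hx
    have hy0 := aux_Dset_pos hy
    have hfx := hfpos x hx
    have hfy := hfpos y hy
    by_contra hne
    rcases lt_or_gt_of_ne hne with hlt | hgt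
    · have hdiv : f y / f x < y / x := by
        rw [div_lt_div_iff₀ hfx hx0]; linarith
      obtain ⟨q, hq1, hq2⟩ := exists_rat_btwn hdiv
      have hq0 : (0:ℝ) < q := lt_trans (div_pos hfy hfx) hq1
      have hqx : (q:ℝ) * x ∈ Dset α := aux_Dset_ratsmul hx (by exact_mod_cast hq0)
      have hle : (q:ℝ) * x ≤ y := (le_div_iff₀ hx0).mp hq2.le
      have hm := hmono _ hqx y hy hle
      rw [hrat q (by exact_mod_cast hq0) x hx] at hm
      have : f y < (q:ℝ) * f x := (div_lt_iff₀ hfx).mp hq1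
      linarith
    · have hdiv : y / x < f y / f x := by
        rw [div_lt_div_iff₀ hx0 hfx]; linarith
      obtain ⟨q, hq1, hq2⟩ := exists_rat_btwn hdiv
      have hq0 : (0:ℝ) < q := lt_trans (div_pos hy0 hx0) hq1
      have hqx : (q:ℝ) * x ∈ Dset α := aux_Dset_ratsmul hx (by exact_mod_cast hq0)
      have hle : y ≤ (q:ℝ) * x := ((div_lt_iff₀ hx0).mp hq1).le
      have hm := hmono y hy _ hqx hle
      rw [hrat q (by exact_mod_cast hq0) x hx] at hm
      have : (q:ℝ) * f x < f y := (lt_div_iff₀ hfx).mp hq2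
      linarith
  -- conclude
  have htpos : 0 < f 1 := hfpos 1 hΔ1
  obtain ⟨⟨c, d, hcd⟩, _⟩ := hmapsto hΔ1
  obtain ⟨⟨a, b, hab⟩, _⟩ := hmapsto hΔα
  have hfα : f α = α * f 1 := by simpa using hlin 1 hΔ1 α hΔα
  rw [hfα] at hab
  -- hcd : f 1 = c β + d ; hab : α * f 1 = a β + b
  have hdet : a * d - b * c ≠ 0 := by
    intro h0
    have h0' : (a:ℝ) * d - (b:ℝ) * c = 0 := by exact_mod_cast congrArg (fun r : ℚ => (r:ℝ)) h0
    have key : f 1 * (((-c:ℚ):ℝ) * α + (a:ℚ)) = 0 := by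
      push_cast
      linear_combination (a:ℝ) * hcd - (c:ℝ) * hab + h0'
    have key2 : ((-c:ℚ):ℝ) * α + ((a:ℚ):ℝ) = 0 := by
      rcases mul_eq_zero.mp key with h | h
      · exact absurd h htpos.ne'
      · exact h
    obtain ⟨hc0, ha0⟩ := aux_irr_lin hαirr key2
    have hc0 : c = 0 := by simpa using hc0
    -- now f 1 = d, α * f 1 = b  (a = 0, c = 0)
    rw [hc0] at hcd
    rw [ha0] at hab
    simp at hcd hab
    -- hcd : f 1 = d, hab : α * f 1 = b
    have hd0 : (d:ℝ) ≠ 0 := by rw [← hcd]; exact htpos.ne'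
    rw [hcd] at hab
    have : α = ((b / d : ℚ):ℝ) := by
      push_cast
      rw [eq_div_iff hd0]
      exact hab
    exact hαirr ⟨b / d, this.symm⟩
  refine ⟨-d, b, c, -a, by intro h; exact hdet (by linear_combination h), ?_⟩
  have hden : ((c:ℚ):ℝ) * α + ((-a : ℚ):ℝ) ≠ 0 := by
    intro h
    obtain ⟨hc0, ha0⟩ := aux_irr_lin hαirr h
    have ha0' : a = 0 := by simpa using ha0
    apply hdet
    rw [hc0, ha0']
    ring
  rw [eq_div_iff hden]
  push_cast
  push_cast at hden
  linear_combination -(α * hcd) + hab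

-- positive-denominator case
lemma aux_back_pos (α β : ℝ) (hαirr : Irrational α)
    (a b c d : ℚ) (hdet : a * d - b * c ≠ 0)
    (hβeq : β = ((a : ℝ) * α + b) / ((c : ℝ) * α + d))
    (hspos : 0 < (c:ℝ) * α + d) :
    DVSEquiv (Dset α) (Dset β) := by
  have hdetR : (a:ℝ) * d - (b:ℝ) * c ≠ 0 := by
    intro h
    apply hdet
    exact_mod_cast h
  have hβs : β * ((c:ℝ) * α + d) = (a:ℝ) * α + b := by
    rw [hβeq]; exact div_mul_cancel₀ _ hspos.ne'
  set s := (c:ℝ) * α + d with hsdef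
  have hmaps : ∀ x ∈ Dset α, x / s ∈ Dset β := by
    rintro x ⟨⟨p, q, hx⟩, hx0⟩
    refine ⟨⟨(p * d - q * c) / (a * d - b * c), (q * a - p * b) / (a * d - b * c), ?_⟩,
      div_pos hx0 hspos⟩
    rw [div_eq_iff hspos.ne']
    push_cast
    rw [div_mul_eq_mul_div, ← add_div, div_mul_eq_mul_div, eq_div_iff hdetR]
    linear_combination ((a:ℝ) * d - (b:ℝ) * c) * hx - ((p:ℝ) * d - (q:ℝ) * c) * hβs - ((q:ℝ) * a - (p:ℝ) * b) * hsdef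
  have hsurj : ∀ y ∈ Dset β, ∃ x ∈ Dset α, x / s = y := by
    rintro y ⟨⟨u, v, hy⟩, hy0⟩
    refine ⟨y * s, ⟨⟨u * a + v * c, u * b + v * d, ?_⟩, mul_pos hy0 hspos⟩, ?_⟩
    · push_cast
      rw [hsdef]
      linear_combination ((c:ℝ) * α + d) * hy + (u:ℝ) * hβs
    · field_simp
  refine ⟨fun x => x / s, ⟨⟨hmaps, ?_, ?_⟩, ?_⟩⟩
  · intro x _ y _ h
    field_simp [hspos.ne'] at h
    exact h
  · intro y hy
    obtain ⟨x, hx, hxy⟩ := hsurj y hy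
    exact ⟨x, hx, hxy⟩
  · intro x hx y hy z hz
    constructor
    · rintro ⟨_, _, _, h1, h2⟩
      refine ⟨hmaps x hx, hmaps y hy, hmaps z hz, ?_, ?_⟩
      · show |x / s - y / s| ≤ z / s
        rw [div_sub_div_same, abs_div, abs_of_pos hspos]
        gcongr
      · show z / s ≤ x / s + y / s
        rw [← add_div]
        gcongr
    · rintro ⟨_, _, _, h1, h2⟩
      have h1' : |x / s - y / s| ≤ z / s := h1
      have h2' : z / s ≤ x / s + y / s := h2
      rw [div_sub_div_same, abs_div, abs_of_pos hspos, div_le_div_iff_of_pos_right hspos] at h1'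
      rw [← add_div, div_le_div_iff_of_pos_right hspos] at h2'
      exact ⟨hx, hy, hz, h1', h2'⟩

lemma aux_back (α β : ℝ) (hαirr : Irrational α) (h : EGL2Q α β) :
    DVSEquiv (Dset α) (Dset β) := by
  obtain ⟨a, b, c, d, hdet, hβeq⟩ := h
  have hs : (c:ℝ) * α + d ≠ 0 := by
    intro h0
    obtain ⟨hc0, hd0⟩ := aux_irr_lin hαirr h0
    apply hdet
    rw [hc0, hd0]
    ring
  rcases hs.lt_or_gt with hneg | hpos
  · have hdet' : (-a) * (-d) - (-b) * (-c) ≠ 0 := by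
      intro h0; exact hdet (by linear_combination h0)
    have he : β = (((-a : ℚ):ℝ) * α + ((-b : ℚ):ℝ)) / (((-c : ℚ):ℝ) * α + ((-d : ℚ):ℝ)) := by
      push_cast
      rw [hβeq,
        show -(a:ℝ) * α + -(b:ℝ) = -((a:ℝ) * α + b) by ring,
        show -(c:ℝ) * α + -(d:ℝ) = -((c:ℝ) * α + d) by ring,
        neg_div_neg_eq]
    have hpos' : 0 < ((-c : ℚ):ℝ) * α + ((-d : ℚ):ℝ) := by push_cast; linarith
    exact aux_back_pos α β hαirr (-a) (-b) (-c) (-d) hdet' he hpos'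
  · exact aux_back_pos α β hαirr a b c d hdet hβeq hpos

/-- For positive irrationals `α, β`, the distance value sets `Δ_α` and `Δ_β` are
equivalent iff `α` and `β` are `E^{IR}_{GL₂(ℚ)}`-equivalent. -/
theorem dset_equiv_iff_EGL2Q (α β : ℝ) (hα : 0 < α) (hαirr : Irrational α)
    (hβ : 0 < β) (hβirr : Irrational β) :
    DVSEquiv (Dset α) (Dset β) ↔ EGL2Q α β :=
  ⟨aux_forward α β hα hαirr, aux_back α β hαirr⟩
end

section
/- Let Δ and Λ be distance value sets and let f : Δ → Λ be a witness of their equivalence. Then for all x, y ∈ Δ with x > 2y, one has f(x) > 2·f(y). Consequently, if inf Δ = 0, then inf Λ = 0. -/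
/-- A witness of equivalence doubles strict "more than double" gaps; consequently
it carries distance value sets with infimum zero to ones with infimum zero. -/
theorem witness_doubling (Δ Λ : Set ℝ) (hΔ : IsDVS Δ) (hΛ : IsDVS Λ)
    (f : ℝ → ℝ) (hf : IsEquivWitness Δ Λ f) :
    (∀ x ∈ Δ, ∀ y ∈ Δ, 2 * y < x → 2 * f y < f x) ∧
    (sInf Δ = 0 → sInf Λ = 0) := by
  obtain ⟨hbij, htri⟩ := hf
  have key : ∀ x ∈ Δ, ∀ y ∈ Δ, 2 * y < x → 2 * f y < f x := by
    intro x hx y hy hxy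
    have hypos := hΔ.1 y hy
    have hfx : f x ∈ Λ := hbij.1 hx
    have hfy : f y ∈ Λ := hbij.1 hy
    have hfxpos := hΛ.1 _ hfx
    have hfypos := hΛ.1 _ hfy
    have hnot : ¬ IsTriangle Δ x y y := by
      rintro ⟨_, _, _, habs, _⟩
      rw [abs_le] at habs
      linarith [habs.2]
    have hnot' : ¬ IsTriangle Λ (f x) (f y) (f y) := by
      rw [← htri x hx y hy y hy]; exact hnot
    by_contra h
    apply hnot'
    refine ⟨hfx, hfy, hfy, ?_, by linarith⟩
    rw [abs_le]; constructor <;> linarith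
  refine ⟨key, ?_⟩
  intro hinf
  rcases Set.eq_empty_or_nonempty Δ with hE | ⟨x0, hx0⟩
  · have hLE : Λ = ∅ := by
      apply Set.eq_empty_of_subset_empty
      intro b hb
      obtain ⟨a, ha, _⟩ := hbij.2.2 hb
      rw [hE] at ha; exact ha
    rw [hLE, Real.sInf_empty]
  · have hΛne : Λ.Nonempty := ⟨f x0, hbij.1 hx0⟩
    have hΛbdd : BddBelow Λ := ⟨0, fun b hb => le_of_lt (hΛ.1 b hb)⟩
    have hc0 : 0 ≤ sInf Λ := le_csInf hΛne fun b hb => le_of_lt (hΛ.1 b hb)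
    by_contra hne
    have hc : 0 < sInf Λ := lt_of_le_of_ne hc0 (Ne.symm hne)
    obtain ⟨b, hb, hblt⟩ := exists_lt_of_csInf_lt hΛne (by linarith : sInf Λ < 2 * sInf Λ)
    obtain ⟨x, hx, hfxb⟩ := hbij.2.2 hb
    have hxpos := hΔ.1 x hx
    have hΔne : Δ.Nonempty := ⟨x, hx⟩
    obtain ⟨y, hy, hylt⟩ := exists_lt_of_csInf_lt hΔne (by rw [hinf]; linarith : sInf Δ < x / 2)
    have hk := key x hx y hy (by linarith)
    have hge : sInf Λ ≤ f y := csInf_le hΛbdd (hbij.1 hy)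
    rw [hfxb] at hk
    linarith
end

section
/- Let Δ and Λ be distance value sets with inf Δ = 0, and let f : Δ → Λ be a witness of their equivalence. Then f is continuous on Δ: for every x ∈ Δ and every ε > 0 there exists δ > 0 such that for all y ∈ Δ, |x − y| < δ implies |f(x) − f(y)| < ε. -/
/-- A witness of equivalence of distance value sets, where the first has
infimum zero, is continuous on its domain. -/
theorem witness_continuous (Δ Λ : Set ℝ) (hΔ : IsDVS Δ) (hΛ : IsDVS Λ)
    (hΔ0 : sInf Δ = 0) (f : ℝ → ℝ) (hf : IsEquivWitness Δ Λ f) :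
    ∀ x ∈ Δ, ∀ ε : ℝ, 0 < ε → ∃ δ : ℝ, 0 < δ ∧
      ∀ y ∈ Δ, |x - y| < δ → |f x - f y| < ε := by
  obtain ⟨hbij, htri⟩ := hf
  have hmaps := hbij.mapsTo
  have hΔpos := hΔ.1
  have hΛpos := hΛ.1
  -- Key lemma: if 2b < a in Δ then 2 f(b) < f(a).
  have lemA : ∀ a ∈ Δ, ∀ b ∈ Δ, 2 * b < a → 2 * f b < f a := by
    intro a ha b hb hab
    have hbpos := hΔpos b hb
    have hnt : ¬ IsTriangle Δ a b b := by
      rintro ⟨_, _, _, h1, _⟩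
      rw [abs_of_nonneg (by linarith)] at h1
      linarith
    have hnt2 : ¬ IsTriangle Λ (f a) (f b) (f b) :=
      fun h => hnt ((htri a ha b hb b hb).mpr h)
    have hfa : f a ∈ Λ := hmaps ha
    have hfb : f b ∈ Λ := hmaps hb
    have hfapos := hΛpos _ hfa
    have hfbpos := hΛpos _ hfb
    by_contra hc
    push_neg at hc
    apply hnt2
    refine ⟨hfa, hfb, hfb, ?_, by linarith⟩
    rw [abs_le]
    constructor <;> linarith
  intro x hx ε hε
  have hxpos := hΔpos x hx
  have hne : Δ.Nonempty := ⟨x, hx⟩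
  have hsmall : ∀ c : ℝ, 0 < c → ∃ d ∈ Δ, d < c := by
    intro c hc
    exact exists_lt_of_csInf_lt hne (by rw [hΔ0]; exact hc)
  obtain ⟨d₀, hd₀Δ, hd₀x⟩ := hsmall x hxpos
  -- halving chain: get d < x with 2^n * f d ≤ f d₀
  have key : ∀ n : ℕ, ∃ d ∈ Δ, d < x ∧ 2 ^ n * f d ≤ f d₀ := by
    intro n
    induction n with
    | zero => exact ⟨d₀, hd₀Δ, hd₀x, by simp⟩
    | succ n ih =>
      obtain ⟨d, hdΔ, hdx, hdf⟩ := ih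
      have hdpos := hΔpos d hdΔ
      obtain ⟨d', hd'Δ, hd'⟩ := hsmall (d / 2) (by linarith)
      have h2 : 2 * f d' < f d := lemA d hdΔ d' hd'Δ (by linarith)
      refine ⟨d', hd'Δ, by linarith, ?_⟩
      have heq : (2:ℝ) ^ (n+1) * f d' = 2 ^ n * (2 * f d') := by ring
      rw [heq]
      calc 2 ^ n * (2 * f d') ≤ 2 ^ n * f d :=
            mul_le_mul_of_nonneg_left (le_of_lt h2) (by positivity)
        _ ≤ f d₀ := hdf
  obtain ⟨n, hn⟩ := pow_unbounded_of_one_lt (f d₀ / ε) (by norm_num : (1:ℝ) < 2)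
  obtain ⟨d, hdΔ, hdx, hdf⟩ := key n
  have h2n : (0:ℝ) < 2 ^ n := by positivity
  have hfd : f d < ε := by
    rw [div_lt_iff₀ hε] at hn
    have : 2 ^ n * f d < 2 ^ n * ε := lt_of_le_of_lt hdf (by linarith [hn])
    exact lt_of_mul_lt_mul_left this (le_of_lt h2n)
  refine ⟨d, hΔpos d hdΔ, ?_⟩
  intro y hy hxy
  have hypos := hΔpos y hy
  have htriD : IsTriangle Δ x y d := ⟨hx, hy, hdΔ, le_of_lt hxy, by linarith⟩
  obtain ⟨_, _, _, h1, _⟩ := (htri x hx y hy d hdΔ).mp htriD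
  exact lt_of_le_of_lt h1 hfd
end

section
/- Let Δ and Λ be distance value sets with inf Δ = 0, let f : Δ → Λ be a witness of their equivalence, and let x, y ∈ Δ. Then exactly one of the following holds for the set {z ∈ Δ : z > x + y}: either f(z) > f(x) + f(y) for every such z, or f(z) < |f(x) − f(y)| for every such z. Similarly, for the set {z ∈ Δ : z < |x − y|}: either f(z) > f(x) + f(y) for every such z, or f(z) < |f(x) − f(y)| for every such z. -/
lemma key_no_mix (Δ Λ : Set ℝ) (hΔ : IsDVS Δ) (hΛ : IsDVS Λ)
    (hΔ0 : sInf Δ = 0) (f : ℝ → ℝ) (hf : IsEquivWitness Δ Λ f)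
    (x : ℝ) (hx : x ∈ Δ) (y : ℝ) (hy : y ∈ Δ)
    (z1 z2 : ℝ) (hz1Δ : z1 ∈ Δ) (hz2Δ : z2 ∈ Δ) (hlt12 : z1 < z2)
    (hside : (f x + f y < f z1 ∧ f z2 < |f x - f y|) ∨
             (f z1 < |f x - f y| ∧ f x + f y < f z2))
    (hzone : ∀ w ∈ Δ, z1 ≤ w → w ≤ z2 → ¬(|x - y| ≤ w ∧ w ≤ x + y)) :
    False := by
  classical
  have pos : ∀ z ∈ Δ, 0 < z := hΔ.1
  have tri : ∀ a ∈ Δ, ∀ b ∈ Δ, ∀ c ∈ Δ,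
      ((|a - b| ≤ c ∧ c ≤ a + b) ↔ (|f a - f b| ≤ f c ∧ f c ≤ f a + f b)) := by
    intro a ha b hb c hc
    have h := hf.2 a ha b hb c hc
    unfold IsTriangle at h
    constructor
    · intro hh
      have := h.mp ⟨ha, hb, hc, hh.1, hh.2⟩
      exact ⟨this.2.2.2.1, this.2.2.2.2⟩
    · intro hh
      have := h.mpr ⟨hf.1.mapsTo ha, hf.1.mapsTo hb, hf.1.mapsTo hc, hh.1, hh.2⟩
      exact ⟨this.2.2.2.1, this.2.2.2.2⟩
  have habs : |f x - f y| + 2 * min (f x) (f y) = f x + f y := by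
    rcases le_total (f x) (f y) with h | h
    · rw [abs_of_nonpos (by linarith), min_eq_left h]; ring
    · rw [abs_of_nonneg (by linarith), min_eq_right h]; ring
  have hne : Δ.Nonempty := ⟨x, hx⟩
  have hbdd : BddBelow Δ := ⟨0, fun t ht => le_of_lt (pos t ht)⟩
  obtain ⟨ε, hεΔ, hεlt⟩ : ∃ ε ∈ Δ, ε < min (min x y) z1 := by
    apply (csInf_lt_iff hbdd hne).mp
    rw [hΔ0]
    exact lt_min (lt_min (pos x hx) (pos y hy)) (pos z1 hz1Δ)
  have hε0 : 0 < ε := pos ε hεΔ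
  have hεx : ε < x := lt_of_lt_of_le hεlt (le_trans (min_le_left _ _) (min_le_left _ _))
  have hεy : ε < y := lt_of_lt_of_le hεlt (le_trans (min_le_left _ _) (min_le_right _ _))
  have hεz : ε < z1 := lt_of_lt_of_le hεlt (min_le_right _ _)
  have hfεx : f ε ≤ f x + f x := by
    have := (tri x hx x hx ε hεΔ).mp ⟨by rw [sub_self, abs_zero]; exact le_of_lt hε0, by linarith⟩
    exact this.2
  have hfεy : f ε ≤ f y + f y := by
    have := (tri y hy y hy ε hεΔ).mp ⟨by rw [sub_self, abs_zero]; exact le_of_lt hε0, by linarith⟩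
    exact this.2
  have hfεm : f ε ≤ 2 * min (f x) (f y) := by
    rcases le_total (f x) (f y) with h | h
    · rw [min_eq_left h]; linarith
    · rw [min_eq_right h]; linarith
  -- gap lemma
  have gap : ∀ a ∈ Δ, ∀ b ∈ Δ, f x + f y < f a → f b < |f x - f y| → ε ≤ a + b →
      ε < |a - b| := by
    intro a ha b hb hA hB hab
    by_contra hcon
    push_neg at hcon
    have h1 : f ε < f a - f b := by linarith
    have h2 := (tri a ha b hb ε hεΔ).mp ⟨hcon, hab⟩
    have h3 : f a - f b ≤ |f a - f b| := le_abs_self _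
    linarith [h2.1]
  -- zone dichotomy
  have dich : ∀ w ∈ Δ, z1 ≤ w → w < z2 → f w < |f x - f y| ∨ f x + f y < f w := by
    intro w hw h1 h2
    have hnt : ¬(|x - y| ≤ w ∧ w ≤ x + y) := hzone w hw h1 (le_of_lt h2)
    by_contra hc
    push_neg at hc
    exact hnt ((tri x hx y hy w hw).mpr ⟨hc.1, hc.2⟩)
  -- step lemma
  have step : ∀ a ∈ Δ, z1 ≤ a → a + ε < z2 →
      (a + ε ∈ Δ ∧ (f x + f y < f a → f x + f y < f (a + ε)) ∧
        (f a < |f x - f y| → f (a + ε) < |f x - f y|)) := by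
    intro a ha h1 h2
    have ha0 : 0 < a := pos a ha
    have haε : a + ε ∈ Δ := by
      obtain ⟨hb, hub⟩ := hΔ.2 a ha ε hεΔ
      by_cases hB : BddAbove Δ
      · have hle : a + ε ≤ sSup Δ := le_trans (le_of_lt h2) (le_csSup hB hz2Δ)
        have := hb hB
        rwa [min_eq_left hle] at this
      · exact hub hB
    have htri := (tri a ha ε hεΔ (a + ε) haε).mp
      ⟨by rw [abs_of_nonneg (by linarith)]; linarith, le_refl _⟩
    have hlow : f a - f ε ≤ f (a + ε) := le_trans (le_abs_self _) htri.1
    have hhigh : f (a + ε) ≤ f a + f ε := htri.2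
    refine ⟨haε, ?_, ?_⟩
    · intro hA
      rcases dich (a + ε) haε (by linarith) h2 with h | h
      · exfalso; linarith
      · exact h
    · intro hB
      rcases dich (a + ε) haε (by linarith) h2 with h | h
      · exact h
      · exfalso; linarith
  -- walk
  have walk : ∀ k : ℕ, z1 + k * ε < z2 →
      (z1 + k * ε ∈ Δ ∧ (f x + f y < f z1 → f x + f y < f (z1 + k * ε)) ∧
        (f z1 < |f x - f y| → f (z1 + k * ε) < |f x - f y|)) := by
    intro k
    induction k with
    | zero =>
      intro _
      simp only [Nat.cast_zero, zero_mul, add_zero]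
      exact ⟨hz1Δ, fun h => h, fun h => h⟩
    | succ k ih =>
      intro hk
      have hkε : (0:ℝ) ≤ (k : ℝ) * ε := mul_nonneg (Nat.cast_nonneg k) (le_of_lt hε0)
      have hcast : ((k + 1 : ℕ) : ℝ) = (k : ℝ) + 1 := by push_cast; ring
      rw [hcast] at hk ⊢
      have hk' : z1 + (k : ℝ) * ε < z2 := by nlinarith
      obtain ⟨hmem, hA, hB⟩ := ih hk'
      have hs := step (z1 + (k : ℝ) * ε) hmem (by linarith) (by linarith)
      have heq : z1 + ((k : ℝ) + 1) * ε = z1 + (k : ℝ) * ε + ε := by ring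
      rw [heq]
      exact ⟨hs.1, fun h => hs.2.1 (hA h), fun h => hs.2.2 (hB h)⟩
  -- find the last step
  obtain ⟨n, hn⟩ := Archimedean.arch (z2 - z1) hε0
  rw [nsmul_eq_mul] at hn
  have hex : ∃ k : ℕ, z2 ≤ z1 + ((k : ℝ) + 1) * ε := ⟨n, by nlinarith⟩
  set k := Nat.find hex with hkdef
  have h1 : z2 ≤ z1 + ((k : ℝ) + 1) * ε := Nat.find_spec hex
  have h2 : z1 + (k : ℝ) * ε < z2 := by
    rcases Nat.eq_zero_or_pos k with hk0 | hk0
    · rw [hk0]; simp only [Nat.cast_zero, zero_mul, add_zero]; exact hlt12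
    · obtain ⟨j, hj⟩ := Nat.exists_eq_succ_of_ne_zero (Nat.pos_iff_ne_zero.mp hk0)
      have := Nat.find_min hex (by omega : j < k)
      push_neg at this
      have : z1 + ((j : ℝ) + 1) * ε < z2 := this
      have hcast : (k : ℝ) = (j : ℝ) + 1 := by rw [hj]; push_cast; ring
      rw [hcast]; exact this
  obtain ⟨haΔ, hA, hB⟩ := walk k h2
  set a := z1 + (k : ℝ) * ε with hadef
  have hkε : (0:ℝ) ≤ (k : ℝ) * ε := mul_nonneg (Nat.cast_nonneg k) (le_of_lt hε0)
  have habs2 : |a - z2| = z2 - a := by rw [abs_of_nonpos (by linarith)]; ring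
  have hεab : ε ≤ a + z2 := by
    have := pos z2 hz2Δ; linarith
  rcases hside with ⟨hA1, hB2⟩ | ⟨hB1, hA2⟩
  · have := gap a haΔ z2 hz2Δ (hA hA1) hB2 hεab
    rw [habs2] at this
    linarith
  · have hga := gap z2 hz2Δ a haΔ hA2 (hB hB1) (by linarith)
    rw [abs_sub_comm, habs2] at hga
    linarith

/-- For a witness of equivalence `f` and `x, y ∈ Δ`: on the set of `z ∈ Δ` with
`z > x + y`, either `f` is everywhere above `f x + f y` or everywhere below
`|f x - f y|`; and likewise on the set of `z ∈ Δ` with `z < |x - y|`. -/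
theorem witness_dichotomy (Δ Λ : Set ℝ) (hΔ : IsDVS Δ) (hΛ : IsDVS Λ)
    (hΔ0 : sInf Δ = 0) (f : ℝ → ℝ) (hf : IsEquivWitness Δ Λ f)
    (x : ℝ) (hx : x ∈ Δ) (y : ℝ) (hy : y ∈ Δ) :
    ((∀ z ∈ Δ, x + y < z → f x + f y < f z) ∨
      (∀ z ∈ Δ, x + y < z → f z < |f x - f y|)) ∧
    ((∀ z ∈ Δ, z < |x - y| → f x + f y < f z) ∨
      (∀ z ∈ Δ, z < |x - y| → f z < |f x - f y|)) := by
  classical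
  have pos : ∀ z ∈ Δ, 0 < z := hΔ.1
  have fpos : ∀ z ∈ Δ, 0 < f z := fun z hz => hΛ.1 (f z) (hf.1.mapsTo hz)
  have tri : ∀ a ∈ Δ, ∀ b ∈ Δ, ∀ c ∈ Δ,
      ((|a - b| ≤ c ∧ c ≤ a + b) ↔ (|f a - f b| ≤ f c ∧ f c ≤ f a + f b)) := by
    intro a ha b hb c hc
    have h := hf.2 a ha b hb c hc
    unfold IsTriangle at h
    constructor
    · intro hh
      have := h.mp ⟨ha, hb, hc, hh.1, hh.2⟩
      exact ⟨this.2.2.2.1, this.2.2.2.2⟩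
    · intro hh
      have := h.mpr ⟨hf.1.mapsTo ha, hf.1.mapsTo hb, hf.1.mapsTo hc, hh.1, hh.2⟩
      exact ⟨this.2.2.2.1, this.2.2.2.2⟩
  have dich0 : ∀ z ∈ Δ, ¬(|x - y| ≤ z ∧ z ≤ x + y) →
      f z < |f x - f y| ∨ f x + f y < f z := by
    intro z hz hnt
    by_contra hc
    push_neg at hc
    exact hnt ((tri x hx y hy z hz).mpr ⟨hc.1, hc.2⟩)
  have habsle : |f x - f y| ≤ f x + f y := by
    rcases le_total (f x) (f y) with h | h
    · rw [abs_of_nonpos (by linarith)]; linarith [fpos x hx, fpos y hy]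
    · rw [abs_of_nonneg (by linarith)]; linarith [fpos x hx, fpos y hy]
  -- general mixing contradiction
  have nomix : ∀ a ∈ Δ, ∀ b ∈ Δ, f x + f y < f a → f b < |f x - f y| →
      (∀ w ∈ Δ, min a b ≤ w → w ≤ max a b → ¬(|x - y| ≤ w ∧ w ≤ x + y)) → False := by
    intro a ha b hb hA hB hzone
    rcases lt_trichotomy a b with h | h | h
    · apply key_no_mix Δ Λ hΔ hΛ hΔ0 f hf x hx y hy a b ha hb h (Or.inl ⟨hA, hB⟩)
      intro w hw h1 h2
      exact hzone w hw (by rw [min_eq_left (le_of_lt h)]; exact h1)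
        (by rw [max_eq_right (le_of_lt h)]; exact h2)
    · exfalso; rw [h] at hA; linarith
    · apply key_no_mix Δ Λ hΔ hΛ hΔ0 f hf x hx y hy b a hb ha h (Or.inr ⟨hB, hA⟩)
      intro w hw h1 h2
      exact hzone w hw (by rw [min_eq_right (le_of_lt h)]; exact h1)
        (by rw [max_eq_left (le_of_lt h)]; exact h2)
  constructor
  · by_cases hAll : ∀ z ∈ Δ, x + y < z → f x + f y < f z
    · exact Or.inl hAll
    · right
      push_neg at hAll
      obtain ⟨z1, hz1Δ, hz1gt, hz1le⟩ := hAll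
      have hz1B : f z1 < |f x - f y| := by
        rcases dich0 z1 hz1Δ (fun h => absurd h.2 (not_le.mpr hz1gt)) with h | h
        · exact h
        · linarith
      intro z2 hz2Δ hz2gt
      rcases dich0 z2 hz2Δ (fun h => absurd h.2 (not_le.mpr hz2gt)) with h | h
      · exact h
      · exfalso
        refine nomix z2 hz2Δ z1 hz1Δ h hz1B ?_
        intro w hw h1 h2 hcon
        have : x + y < min z2 z1 := lt_min hz2gt hz1gt
        linarith [hcon.2]
  · by_cases hAll : ∀ z ∈ Δ, z < |x - y| → f x + f y < f z
    · exact Or.inl hAll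
    · right
      push_neg at hAll
      obtain ⟨z1, hz1Δ, hz1lt, hz1le⟩ := hAll
      have hz1B : f z1 < |f x - f y| := by
        rcases dich0 z1 hz1Δ (fun h => absurd h.1 (not_le.mpr hz1lt)) with h | h
        · exact h
        · linarith
      intro z2 hz2Δ hz2lt
      rcases dich0 z2 hz2Δ (fun h => absurd h.1 (not_le.mpr hz2lt)) with h | h
      · exact h
      · exfalso
        refine nomix z2 hz2Δ z1 hz1Δ h hz1B ?_
        intro w hw h1 h2 hcon
        have : max z2 z1 < |x - y| := max_lt hz2lt hz1lt
        linarith [hcon.1]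
end

section
/- Let Δ and Λ be distance value sets with inf Δ = 0, and let f : Δ → Λ be a witness of their equivalence. If x, y, and x + y all belong to Δ, then f(x + y) = f(x) + f(y). -/
open Classical in
/-- Auxiliary chain: repeated (capped) addition of `ε` within a set `S`. -/
noncomputable def dvsChain (S : Set ℝ) (ε : ℝ) : ℕ → ℝ
  | 0 => ε
  | n + 1 =>
    if BddAbove S then min (dvsChain S ε n + ε) (sSup S) else dvsChain S ε n + ε

lemma dvsChain_mem (S : Set ℝ) (hS : IsDVS S) (ε : ℝ) (hε : ε ∈ S) :
    ∀ n, dvsChain S ε n ∈ S := by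
  intro n
  induction n with
  | zero => exact hε
  | succ n ih =>
    by_cases hb : BddAbove S
    · simp only [dvsChain, if_pos hb]
      exact (hS.2 _ ih _ hε).1 hb
    · simp only [dvsChain, if_neg hb]
      exact (hS.2 _ ih _ hε).2 hb

lemma dvsChain_succ_le (S : Set ℝ) (ε : ℝ) (n : ℕ) :
    dvsChain S ε (n + 1) ≤ dvsChain S ε n + ε := by
  simp only [dvsChain]
  split
  · exact min_le_left _ _
  · exact le_refl _

lemma dvsChain_ge (S : Set ℝ) (ε : ℝ) (hε : 0 < ε) (v : ℝ)
    (hv : BddAbove S → v ≤ sSup S) :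
    ∀ n : ℕ, min (((n : ℝ) + 1) * ε) v ≤ dvsChain S ε n := by
  intro n
  induction n with
  | zero =>
    simp only [Nat.cast_zero, zero_add, one_mul, dvsChain]
    exact min_le_left _ _
  | succ n ih =>
    have hcast : (((n + 1 : ℕ) : ℝ) + 1) = (n : ℝ) + 2 := by push_cast; ring
    have hle : min (((n : ℝ) + 2) * ε) v ≤ dvsChain S ε n + ε := by
      rcases le_total (((n : ℝ) + 1) * ε) v with h | h
      · have h1 : ((n : ℝ) + 1) * ε ≤ dvsChain S ε n := by
          rw [min_eq_left h] at ih; exact ih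
        calc min (((n : ℝ) + 2) * ε) v ≤ ((n : ℝ) + 2) * ε := min_le_left _ _
          _ = ((n : ℝ) + 1) * ε + ε := by ring
          _ ≤ dvsChain S ε n + ε := by linarith
      · have h1 : v ≤ dvsChain S ε n := by
          rw [min_eq_right h] at ih; exact ih
        calc min (((n : ℝ) + 2) * ε) v ≤ v := min_le_right _ _
          _ ≤ dvsChain S ε n + ε := by linarith
    by_cases hb : BddAbove S
    · simp only [dvsChain, if_pos hb]
      rw [hcast]
      exact le_min hle ((min_le_right _ _).trans (hv hb))
    · simp only [dvsChain, if_neg hb]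
      rw [hcast]
      exact hle

/-- A DVS with arbitrarily small elements is dense below its sup. -/
lemma dvs_dense_s9 (S : Set ℝ) (hS : IsDVS S)
    (hsmall : ∀ δ : ℝ, 0 < δ → ∃ ε ∈ S, ε < δ)
    (u v : ℝ) (hu : 0 ≤ u) (huv : u < v)
    (hv : BddAbove S → v ≤ sSup S) :
    ∃ c ∈ S, u < c ∧ c < v := by
  classical
  obtain ⟨ε, hεS, hεlt⟩ := hsmall (v - u) (by linarith)
  have hεpos : 0 < ε := hS.1 ε hεS
  have hex : ∃ n, u < dvsChain S ε n := by
    obtain ⟨N, hN⟩ := exists_nat_gt (u / ε)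
    refine ⟨N, lt_of_lt_of_le ?_ (dvsChain_ge S ε hεpos v hv N)⟩
    apply lt_min
    · rw [div_lt_iff₀ hεpos] at hN
      nlinarith
    · exact huv
  have key : ∀ n, (∀ m, m < n → ¬ u < dvsChain S ε m) → u < dvsChain S ε n →
      dvsChain S ε n < v := by
    intro n hminl hnlt
    cases n with
    | zero =>
      have h0 : dvsChain S ε 0 = ε := rfl
      rw [h0]
      linarith
    | succ m =>
      have hm : dvsChain S ε m ≤ u := not_lt.1 (hminl m (Nat.lt_succ_self m))
      have := dvsChain_succ_le S ε m
      linarith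
  exact ⟨_, dvsChain_mem S hS ε hεS _, Nat.find_spec hex,
    key _ (fun m hm => Nat.find_min hex hm) (Nat.find_spec hex)⟩

/-- A witness of equivalence of distance value sets (the first having infimum
zero) is additive. -/
theorem witness_additive (Δ Λ : Set ℝ) (hΔ : IsDVS Δ) (hΛ : IsDVS Λ)
    (hΔ0 : sInf Δ = 0) (f : ℝ → ℝ) (hf : IsEquivWitness Δ Λ f)
    (x y : ℝ) (hx : x ∈ Δ) (hy : y ∈ Δ) (hxy : x + y ∈ Δ) :
    f (x + y) = f x + f y := by
  obtain ⟨hbij, htri⟩ := hf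
  have hmaps : ∀ a ∈ Δ, f a ∈ Λ := hbij.mapsTo
  have hΔpos := hΔ.1
  have hΛpos := hΛ.1
  -- arbitrarily small elements of Δ
  have hΔsmall : ∀ δ : ℝ, 0 < δ → ∃ ε ∈ Δ, ε < δ := by
    intro δ hδ
    have hne : Δ.Nonempty := ⟨x, hx⟩
    have hbdd : BddBelow Δ := ⟨0, fun a ha => (hΔpos a ha).le⟩
    have hlt : sInf Δ < δ := by rw [hΔ0]; exact hδ
    exact (csInf_lt_iff hbdd hne).1 hlt
  -- halving elements in Λ
  have hΛhalf : ∀ b ∈ Λ, ∃ η ∈ Λ, 2 * η < b := by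
    intro b hb
    obtain ⟨a, haΔ, hfa⟩ := hbij.surjOn hb
    have hapos : 0 < a := hΔpos a haΔ
    obtain ⟨ε, hεΔ, hεlt⟩ := hΔsmall (a / 2) (by linarith)
    refine ⟨f ε, hmaps ε hεΔ, ?_⟩
    by_contra hcon
    push_neg at hcon
    have hT : IsTriangle Λ (f ε) (f ε) (f a) := by
      refine ⟨hmaps ε hεΔ, hmaps ε hεΔ, hfa ▸ hb, ?_, by linarith [hfa ▸ hΛpos b hb]⟩
      simp only [sub_self, abs_zero]
      rw [hfa]
      exact (hΛpos b hb).le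
    have hT' := (htri ε hεΔ ε hεΔ a haΔ).2 hT
    have := hT'.2.2.2.2
    linarith
  -- arbitrarily small elements of Λ
  have hΛsmall : ∀ δ : ℝ, 0 < δ → ∃ η ∈ Λ, η < δ := by
    intro δ hδ
    have hfx : f x ∈ Λ := hmaps x hx
    have hiter : ∀ n : ℕ, ∃ η ∈ Λ, η ≤ f x / 2 ^ n := by
      intro n
      induction n with
      | zero => exact ⟨f x, hfx, by simp⟩
      | succ n ih =>
        obtain ⟨η, hη, hle⟩ := ih
        obtain ⟨η', hη', hlt⟩ := hΛhalf η hη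
        refine ⟨η', hη', ?_⟩
        have h2 : (0:ℝ) < 2 ^ n := by positivity
        have hη'pos : 0 < η' := hΛpos η' hη'
        rw [pow_succ, le_div_iff₀ (by positivity)]
        rw [le_div_iff₀ h2] at hle
        nlinarith
    obtain ⟨N, hN⟩ := pow_unbounded_of_one_lt (f x / δ) (one_lt_two (α := ℝ))
    obtain ⟨η, hη, hle⟩ := hiter N
    refine ⟨η, hη, lt_of_le_of_lt hle ?_⟩
    rw [div_lt_iff₀ (by positivity)]
    rw [div_lt_iff₀ hδ] at hN
    linarith
  -- f is strictly monotone on Δ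
  have hmono : ∀ a ∈ Δ, ∀ b ∈ Δ, a < b → f a < f b := by
    intro a haΔ b hbΔ hab
    by_contra hcon
    push_neg at hcon
    have hne : f b ≠ f a := fun e =>
      absurd (hbij.injOn hbΔ haΔ e) (ne_of_gt hab)
    have hba : f b < f a := lt_of_le_of_ne hcon hne
    have hfb_pos : 0 < f b := hΛpos _ (hmaps b hbΔ)
    have hfa_pos : 0 < f a := hΛpos _ (hmaps a haΔ)
    obtain ⟨d, hdΛ, hd1, hd2⟩ := dvs_dense_s9 Λ hΛ hΛsmall (f b / 2) (f a / 2)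
      (by linarith) (by linarith)
      (fun hbA => le_trans (by linarith) (le_csSup hbA (hmaps a haΔ)))
    obtain ⟨c, hcΔ, hfc⟩ := hbij.surjOn hdΛ
    have hT1 : IsTriangle Λ (f c) (f c) (f b) := by
      rw [hfc]
      exact ⟨hdΛ, hdΛ, hmaps b hbΔ, by simp [hfb_pos.le], by linarith⟩
    have hb2c : b ≤ c + c := ((htri c hcΔ c hcΔ b hbΔ).2 hT1).2.2.2.2
    have hT2 : ¬ IsTriangle Δ c c a := by
      intro hT
      have := ((htri c hcΔ c hcΔ a haΔ).1 hT).2.2.2.2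
      rw [hfc] at this
      linarith
    have ha2c : c + c < a := by
      by_contra hle
      push_neg at hle
      exact hT2 ⟨hcΔ, hcΔ, haΔ, by simp [(hΔpos a haΔ).le], hle⟩
    linarith
  -- the tight triangle (x, y, x+y)
  have hxpos : 0 < x := hΔpos x hx
  have hypos : 0 < y := hΔpos y hy
  have hT0 : IsTriangle Δ x y (x + y) :=
    ⟨hx, hy, hxy, abs_le.2 ⟨by linarith, by linarith⟩, le_refl _⟩
  have hTL := (htri x hx y hy (x + y) hxy).1 hT0
  have habs : |f x - f y| ≤ f (x + y) := hTL.2.2.2.1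
  have hle : f (x + y) ≤ f x + f y := hTL.2.2.2.2
  have habs1 : f x - f y ≤ f (x + y) := (abs_le.1 habs).2
  -- suppose strict inequality
  by_contra hne
  have hlt : f (x + y) < f x + f y := lt_of_le_of_ne hle hne
  have hfy_lt : f y < f (x + y) := hmono y hy (x + y) hxy (by linarith)
  have hfy_pos : 0 < f y := hΛpos _ (hmaps y hy)
  have hfx_pos : 0 < f x := hΛpos _ (hmaps x hx)
  obtain ⟨u, huΛ, hu1, hu2⟩ := dvs_dense_s9 Λ hΛ hΛsmall (f (x + y) - f y) (f x)
    (by linarith) (by linarith)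
    (fun hbA => le_csSup hbA (hmaps x hx))
  obtain ⟨x', hx'Δ, hfx'⟩ := hbij.surjOn huΛ
  have hupos : 0 < u := hΛpos u huΛ
  have hT3 : IsTriangle Λ (f x') (f y) (f (x + y)) := by
    rw [hfx']
    exact ⟨huΛ, hmaps y hy, hmaps _ hxy,
      abs_le.2 ⟨by linarith, by linarith⟩, by linarith⟩
  have hT3' := (htri x' hx'Δ y hy (x + y) hxy).2 hT3
  have hxx' : x ≤ x' := by linarith [hT3'.2.2.2.2]
  have hfxx' : f x ≤ f x' := by
    rcases eq_or_lt_of_le hxx' with h | h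
    · rw [h]
    · exact (hmono x hx x' hx'Δ h).le
  rw [hfx'] at hfxx'
  linarith
end

section
/- Let Δ and Λ be distance value sets with inf Δ = 0, and let f : Δ → Λ be a witness of their equivalence. Then for all x, t ∈ Δ, f(x)/x = f(t)/t; equivalently, there is a positive real number α such that f(x) = α·x for all x ∈ Δ. -/
lemma dvs_mem_add {Δ : Set ℝ} (hΔ : IsDVS Δ) {x y : ℝ} (hx : x ∈ Δ) (hy : y ∈ Δ)
    (h : BddAbove Δ → x + y ≤ sSup Δ) : x + y ∈ Δ := by
  by_cases hb : BddAbove Δ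
  · have := (hΔ.2 x hx y hy).1 hb
    rwa [min_eq_left (h hb)] at this
  · exact (hΔ.2 x hx y hy).2 hb

lemma witness_double {Δ Λ : Set ℝ} {f : ℝ → ℝ} (hΔ : IsDVS Δ) (hΛ : IsDVS Λ)
    (hf : IsEquivWitness Δ Λ f) {u v : ℝ} (hu : u ∈ Δ) (hv : v ∈ Δ)
    (h : 2 * v < u) : 2 * f v < f u := by
  have hfu : f u ∈ Λ := hf.1.1 hu
  have hfv : f v ∈ Λ := hf.1.1 hv
  have hfupos : 0 < f u := hΛ.1 _ hfu
  have hiff := hf.2 v hv v hv u hu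
  have hnot : ¬ IsTriangle Δ v v u := by
    intro ht
    have := ht.2.2.2.2
    linarith
  have hnot2 : ¬ IsTriangle Λ (f v) (f v) (f u) := fun ht => hnot (hiff.mpr ht)
  by_contra hcon
  push_neg at hcon
  exact hnot2 ⟨hfv, hfv, hfu, by simpa using hfupos.le, by linarith⟩

lemma witness_small {Δ Λ : Set ℝ} {f : ℝ → ℝ} (hΔ : IsDVS Δ) (hΛ : IsDVS Λ)
    (hf : IsEquivWitness Δ Λ f) (hne : Δ.Nonempty) (hΔ0 : sInf Δ = 0) :
    ∀ δ > 0, ∃ ε ∈ Δ, ε < δ ∧ f ε < δ := by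
  obtain ⟨u₀, hu₀⟩ := hne
  have hu₀pos : 0 < u₀ := hΔ.1 _ hu₀
  have hfu₀pos : 0 < f u₀ := hΛ.1 _ (hf.1.1 hu₀)
  have key : ∀ n : ℕ, ∃ ε ∈ Δ, ε ≤ u₀ / 2 ^ n ∧ f ε ≤ f u₀ / 2 ^ n := by
    intro n
    induction n with
    | zero => exact ⟨u₀, hu₀, by simp, by simp⟩
    | succ n ih =>
      obtain ⟨ε, hεΔ, hε1, hε2⟩ := ih
      have hεpos : 0 < ε := hΔ.1 _ hεΔ
      have : sInf Δ < ε / 2 := by rw [hΔ0]; positivity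
      obtain ⟨v, hvΔ, hv⟩ := exists_lt_of_csInf_lt ⟨u₀, hu₀⟩ this
      have h2v : 2 * v < ε := by linarith
      have := witness_double hΔ hΛ hf hεΔ hvΔ h2v
      refine ⟨v, hvΔ, ?_, ?_⟩
      · rw [pow_succ]
        rw [div_mul_eq_div_div]
        linarith
      · rw [pow_succ, div_mul_eq_div_div]
        linarith
  intro δ hδ
  obtain ⟨n, hn⟩ := pow_unbounded_of_one_lt ((max u₀ (f u₀)) / δ) (by norm_num : (1:ℝ) < 2)
  obtain ⟨ε, hεΔ, hε1, hε2⟩ := key n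
  have h2n : (0:ℝ) < 2 ^ n := by positivity
  have hmax : max u₀ (f u₀) < δ * 2 ^ n := by
    rw [div_lt_iff₀ hδ] at hn; linarith
  refine ⟨ε, hεΔ, ?_, ?_⟩
  · have : u₀ < δ * 2 ^ n := lt_of_le_of_lt (le_max_left _ _) hmax
    calc ε ≤ u₀ / 2 ^ n := hε1
    _ < δ := by rw [div_lt_iff₀ h2n]; linarith
  · have : f u₀ < δ * 2 ^ n := lt_of_le_of_lt (le_max_right _ _) hmax
    calc f ε ≤ f u₀ / 2 ^ n := hε2
    _ < δ := by rw [div_lt_iff₀ h2n]; linarith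

set_option maxHeartbeats 1000000 in
lemma witness_mul {Δ Λ : Set ℝ} {f : ℝ → ℝ} (hΔ : IsDVS Δ) (hΛ : IsDVS Λ)
    (hf : IsEquivWitness Δ Λ f)
    (hsmall : ∀ δ > 0, ∃ ε ∈ Δ, ε < δ ∧ f ε < δ)
    {x ε : ℝ} (hx : x ∈ Δ) (hε : ε ∈ Δ) (M : ℕ) (hM : (M : ℝ) * ε + ε ≤ x) :
    ∀ k : ℕ, 1 ≤ k → k ≤ M → ((k : ℝ) * ε ∈ Δ ∧ f ((k : ℝ) * ε) = k * f ε) := by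
  have hεpos : 0 < ε := hΔ.1 _ hε
  have hc : 0 < f ε := hΛ.1 _ (hf.1.1 hε)
  have hxS : BddAbove Δ → x ≤ sSup Δ := fun hb => le_csSup hb hx
  intro k
  induction k using Nat.strong_induction_on with
  | _ k IH =>
    intro hk1 hkM
    match k, hk1, hkM with
    | 1, _, h1M => exact ⟨by simpa using hε, by norm_num⟩
    | (i + 2), _, hkM =>
      have e1 : ((i + 1 : ℕ) : ℝ) = (i:ℝ) + 1 := by push_cast; ring
      have e2 : ((i + 2 : ℕ) : ℝ) = (i:ℝ) + 2 := by push_cast; ring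
      have hi0ε : 0 ≤ (i:ℝ) * ε := mul_nonneg (Nat.cast_nonneg i) hεpos.le
      have hi0c : 0 ≤ (i:ℝ) * f ε := mul_nonneg (Nat.cast_nonneg i) hc.le
      obtain ⟨hjmem, hjval⟩ := IH (i + 1) (by omega) (by omega) (by omega)
      rw [e1] at hjmem hjval
      have hiM : (i:ℝ) + 2 ≤ (M:ℝ) := by exact_mod_cast hkM
      have hstep : ((i:ℝ) + 2) * ε ≤ (M:ℝ) * ε := mul_le_mul_of_nonneg_right hiM hεpos.le
      have hMε : ((i:ℝ) + 2) * ε ≤ (M:ℝ) * ε := hstep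
      -- membership of (i+2)*ε
      have hkmemR : ((i:ℝ) + 2) * ε ∈ Δ := by
        have h : ((i:ℝ) + 1) * ε + ε ∈ Δ := by
          refine dvs_mem_add hΔ hjmem hε (fun hb => ?_)
          have := hxS hb
          nlinarith [hstep]
        have e : ((i:ℝ) + 1) * ε + ε = ((i:ℝ) + 2) * ε := by ring
        rwa [e] at h
      have hLpos : 0 < f (((i:ℝ) + 2) * ε) := hΛ.1 _ (hf.1.1 hkmemR)
      -- triangle ((i+1)ε, ε, (i+2)ε)
      have hT1 : IsTriangle Δ (((i:ℝ) + 1) * ε) ε (((i:ℝ) + 2) * ε) := by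
        refine ⟨hjmem, hε, hkmemR, ?_, by linarith⟩
        rw [abs_le]; constructor <;> nlinarith [hi0ε]
      have hT1' := (hf.2 _ hjmem _ hε _ hkmemR).mp hT1
      rw [hjval] at hT1'
      have hL2 : f (((i:ℝ) + 2) * ε) ≤ ((i:ℝ) + 1) * f ε + f ε := hT1'.2.2.2.2
      have hL1 : ((i:ℝ) + 1) * f ε - f ε ≤ f (((i:ℝ) + 2) * ε) := by
        have h := abs_le.mp hT1'.2.2.2.1
        linarith [h.1]
      have hgoal : f (((i:ℝ) + 2) * ε) = ((i:ℝ) + 2) * f ε := by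
        by_contra hne
        have hLlt : f (((i:ℝ) + 2) * ε) < ((i:ℝ) + 1) * f ε + f ε := by
          rcases lt_or_eq_of_le hL2 with h | h
          · exact h
          · exact absurd (by rw [h]; ring) hne
        -- rule out f((i+2)ε) = i * f ε
        have hLgt : (i:ℝ) * f ε < f (((i:ℝ) + 2) * ε) := by
          rcases lt_or_eq_of_le (by linarith : (i:ℝ) * f ε ≤ f (((i:ℝ) + 2) * ε)) with h | h
          · exact h
          exfalso
          rcases Nat.eq_zero_or_pos i with h0 | hpos
          · rw [← h, h0] at hLpos; norm_num at hLpos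
          · obtain ⟨himem, hival⟩ := IH i (by omega) hpos (by omega)
            have hfeq : f ((i:ℝ) * ε) = f (((i:ℝ) + 2) * ε) := by rw [hival, h]
            have heq := hf.1.2.1 himem hkmemR hfeq
            have : (i:ℝ) * ε < ((i:ℝ) + 2) * ε := by linarith
            linarith [heq ▸ this]
        -- interior case: contradiction via small η
        obtain ⟨η, hηΔ, hη1, hη2⟩ := hsmall
          (min (min (((i:ℝ) + 2) * f ε - f (((i:ℝ) + 2) * ε))
            (f (((i:ℝ) + 2) * ε) - (i:ℝ) * f ε)) ε)
          (lt_min (lt_min (by linarith) (by linarith)) hεpos)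
        have hηpos : 0 < η := hΔ.1 _ hηΔ
        have hηε : η < ε := lt_of_lt_of_le hη1 (min_le_right _ _)
        have hηa : f η < ((i:ℝ) + 2) * f ε - f (((i:ℝ) + 2) * ε) :=
          lt_of_lt_of_le hη2 (le_trans (min_le_left _ _) (min_le_left _ _))
        have hηb : f η < f (((i:ℝ) + 2) * ε) - (i:ℝ) * f ε :=
          lt_of_lt_of_le hη2 (le_trans (min_le_left _ _) (min_le_right _ _))
        have hfηpos : 0 < f η := hΛ.1 _ (hf.1.1 hηΔ)
        have hwmem : ((i:ℝ) + 2) * ε + η ∈ Δ := by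
          refine dvs_mem_add hΔ hkmemR hηΔ (fun hb => ?_)
          have := hxS hb
          linarith
        have hT2 : IsTriangle Δ (((i:ℝ) + 2) * ε) η (((i:ℝ) + 2) * ε + η) := by
          refine ⟨hkmemR, hηΔ, hwmem, ?_, le_refl _⟩
          rw [abs_le]; constructor <;> nlinarith [hi0ε]
        have hT2' := (hf.2 _ hkmemR _ hηΔ _ hwmem).mp hT2
        have hw1 : f (((i:ℝ) + 2) * ε) - f η ≤ f (((i:ℝ) + 2) * ε + η) := by
          have h := abs_le.mp hT2'.2.2.2.1
          linarith [h.1]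
        have hw2 : f (((i:ℝ) + 2) * ε + η) ≤ f (((i:ℝ) + 2) * ε) + f η := hT2'.2.2.2.2
        have hnT : ¬ IsTriangle Δ (((i:ℝ) + 1) * ε) ε (((i:ℝ) + 2) * ε + η) := by
          intro ht
          have h := ht.2.2.2.2
          nlinarith [hi0ε]
        apply hnT
        apply (hf.2 _ hjmem _ hε _ hwmem).mpr
        rw [hjval]
        refine ⟨by rw [← hjval]; exact hf.1.1 hjmem, hf.1.1 hε, hf.1.1 hwmem, ?_, ?_⟩
        · rw [abs_le]; constructor <;> linarith [hi0c]
        · linarith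
      refine ⟨by rw [e2]; exact hkmemR, ?_⟩
      rw [e2, hgoal]

set_option maxHeartbeats 1000000 in
/-- A witness of equivalence of distance value sets (the first having infimum
zero) is multiplication by a single positive real number. -/
theorem witness_linear (Δ Λ : Set ℝ) (hΔ : IsDVS Δ) (hΛ : IsDVS Λ)
    (hΔ0 : sInf Δ = 0) (f : ℝ → ℝ) (hf : IsEquivWitness Δ Λ f) :
    (∀ x ∈ Δ, ∀ t ∈ Δ, f x / x = f t / t) ∧
    ∃ α : ℝ, 0 < α ∧ ∀ x ∈ Δ, f x = α * x := by
  rcases Set.eq_empty_or_nonempty Δ with hem | hne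
  · subst hem
    exact ⟨fun x hx => absurd hx (Set.notMem_empty x),
      1, one_pos, fun x hx => absurd hx (Set.notMem_empty x)⟩
  have hsmall := witness_small hΔ hΛ hf hne hΔ0
  have key : ∀ x ∈ Δ, ∀ t ∈ Δ, f x * t = f t * x := by
    intro x hx t ht
    have hx0 : 0 < x := hΔ.1 _ hx
    have ht0 : 0 < t := hΔ.1 _ ht
    have hfx0 : 0 < f x := hΛ.1 _ (hf.1.1 hx)
    have hft0 : 0 < f t := hΛ.1 _ (hf.1.1 ht)
    have hxt : 0 < x + t := by linarith
    have habs : ∀ δ > 0, |f x * t - f t * x| ≤ δ := by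
      intro δ hδ
      obtain ⟨ε, hεΔ, hε1, hε2⟩ := hsmall (min (min x t / 3) (δ / (4 * (x + t))))
        (lt_min (by positivity) (by positivity))
      have hεpos : 0 < ε := hΔ.1 _ hεΔ
      have hfε0 : 0 < f ε := hΛ.1 _ (hf.1.1 hεΔ)
      have hε3x : 3 * ε < x := by
        have h1 : ε < min x t / 3 := lt_of_lt_of_le hε1 (min_le_left _ _)
        have h2 := min_le_left x t
        linarith
      have hε3t : 3 * ε < t := by
        have h1 : ε < min x t / 3 := lt_of_lt_of_le hε1 (min_le_left _ _)
        have h2 := min_le_right x t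
        linarith
      have hεδ : f ε < δ / (4 * (x + t)) := lt_of_lt_of_le hε2 (min_le_right _ _)
      set M := ⌊x / ε⌋₊ - 1 with hMdef
      set N := ⌊t / ε⌋₊ - 1 with hNdef
      have hfloorx : 3 ≤ ⌊x / ε⌋₊ := by
        apply Nat.le_floor
        rw [le_div_iff₀ hεpos]
        push_cast
        linarith
      have hfloort : 3 ≤ ⌊t / ε⌋₊ := by
        apply Nat.le_floor
        rw [le_div_iff₀ hεpos]
        push_cast
        linarith
      have hM1 : M + 1 = ⌊x / ε⌋₊ := by omega
      have hN1 : N + 1 = ⌊t / ε⌋₊ := by omega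
      have hM2 : 2 ≤ M := by omega
      have hN2 : 2 ≤ N := by omega
      have hMx : (M : ℝ) * ε + ε ≤ x := by
        have h := Nat.floor_le (le_of_lt (div_pos hx0 hεpos))
        rw [← hM1] at h
        push_cast at h
        have h2 : ((M:ℝ) + 1) * ε ≤ (x / ε) * ε := mul_le_mul_of_nonneg_right h hεpos.le
        rw [div_mul_cancel₀ _ (ne_of_gt hεpos)] at h2
        linarith
      have hNt : (N : ℝ) * ε + ε ≤ t := by
        have h := Nat.floor_le (le_of_lt (div_pos ht0 hεpos))
        rw [← hN1] at h
        push_cast at h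
        have h2 : ((N:ℝ) + 1) * ε ≤ (t / ε) * ε := mul_le_mul_of_nonneg_right h hεpos.le
        rw [div_mul_cancel₀ _ (ne_of_gt hεpos)] at h2
        linarith
      have hxM : x < ((M : ℝ) + 2) * ε := by
        have h := Nat.lt_floor_add_one (x / ε)
        rw [← hM1] at h
        push_cast at h
        have h2 : (x / ε) * ε < ((M:ℝ) + 1 + 1) * ε := mul_lt_mul_of_pos_right h hεpos
        rw [div_mul_cancel₀ _ (ne_of_gt hεpos)] at h2
        linarith
      have htN : t < ((N : ℝ) + 2) * ε := by
        have h := Nat.lt_floor_add_one (t / ε)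
        rw [← hN1] at h
        push_cast at h
        have h2 : (t / ε) * ε < ((N:ℝ) + 1 + 1) * ε := mul_lt_mul_of_pos_right h hεpos
        rw [div_mul_cancel₀ _ (ne_of_gt hεpos)] at h2
        linarith
      obtain ⟨h2mem, h2val⟩ := witness_mul hΔ hΛ hf hsmall hx hεΔ M hMx 2 (by norm_num) hM2
      obtain ⟨hMmem, hMval⟩ := witness_mul hΔ hΛ hf hsmall hx hεΔ M hMx M (by omega) le_rfl
      obtain ⟨hNmem, hNval⟩ := witness_mul hΔ hΛ hf hsmall ht hεΔ N hNt N (by omega) le_rfl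
      push_cast at h2mem h2val
      have hMc : (0:ℝ) ≤ (M:ℝ) := Nat.cast_nonneg M
      have hNc : (0:ℝ) ≤ (N:ℝ) := Nat.cast_nonneg N
      have hM2' : (2:ℝ) ≤ (M:ℝ) := by exact_mod_cast hM2
      have hN2' : (2:ℝ) ≤ (N:ℝ) := by exact_mod_cast hN2
      have hMεx : (M:ℝ) * ε ≤ x := by linarith
      have hNεt : (N:ℝ) * ε ≤ t := by linarith
      -- triangle (Mε, 2ε, x)
      have hTx : IsTriangle Δ ((M:ℝ) * ε) (2 * ε) x := by
        refine ⟨hMmem, h2mem, hx, ?_, by linarith⟩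
        rw [abs_le]
        constructor <;> nlinarith
      have hTx' := (hf.2 _ hMmem _ h2mem _ hx).mp hTx
      rw [hMval, h2val] at hTx'
      have hfx1 : (M:ℝ) * f ε - 2 * f ε ≤ f x :=
        le_trans (le_abs_self _) hTx'.2.2.2.1
      have hfx2 : f x ≤ (M:ℝ) * f ε + 2 * f ε := hTx'.2.2.2.2
      -- triangle (Nε, 2ε, t)
      have hTt : IsTriangle Δ ((N:ℝ) * ε) (2 * ε) t := by
        refine ⟨hNmem, h2mem, ht, ?_, by linarith⟩
        rw [abs_le]
        constructor <;> nlinarith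
      have hTt' := (hf.2 _ hNmem _ h2mem _ ht).mp hTt
      rw [hNval, h2val] at hTt'
      have hft1 : (N:ℝ) * f ε - 2 * f ε ≤ f t :=
        le_trans (le_abs_self _) hTt'.2.2.2.1
      have hft2 : f t ≤ (N:ℝ) * f ε + 2 * f ε := hTt'.2.2.2.2
      -- assemble
      have habs1 : |f x - (M:ℝ) * f ε| ≤ 2 * f ε := abs_le.mpr ⟨by linarith, by linarith⟩
      have habs2 : |f t - (N:ℝ) * f ε| ≤ 2 * f ε := abs_le.mpr ⟨by linarith, by linarith⟩
      have hMN : |(M:ℝ) * t - (N:ℝ) * x| ≤ 2 * x + 2 * t := by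
        rw [abs_le]
        have h1 : (M:ℝ) * (t - (N:ℝ) * ε) ≤ (M:ℝ) * (2 * ε) :=
          mul_le_mul_of_nonneg_left (by linarith) hMc
        have h1' : 0 ≤ (M:ℝ) * (t - (N:ℝ) * ε) := mul_nonneg hMc (by linarith)
        have h2 : (N:ℝ) * (x - (M:ℝ) * ε) ≤ (N:ℝ) * (2 * ε) :=
          mul_le_mul_of_nonneg_left (by linarith) hNc
        have h2' : 0 ≤ (N:ℝ) * (x - (M:ℝ) * ε) := mul_nonneg hNc (by linarith)
        constructor <;> nlinarith
      have hδbound : 4 * f ε * (x + t) ≤ δ := by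
        rw [lt_div_iff₀ (by positivity : (0:ℝ) < 4 * (x + t))] at hεδ
        nlinarith
      calc |f x * t - f t * x|
          = |(f x - (M:ℝ) * f ε) * t + (-((f t - (N:ℝ) * f ε) * x)) + f ε * ((M:ℝ) * t - (N:ℝ) * x)| := by
            ring_nf
        _ ≤ |(f x - (M:ℝ) * f ε) * t| + |(-((f t - (N:ℝ) * f ε) * x))| + |f ε * ((M:ℝ) * t - (N:ℝ) * x)| :=
            abs_add_three _ _ _
        _ = |f x - (M:ℝ) * f ε| * t + |f t - (N:ℝ) * f ε| * x + f ε * |(M:ℝ) * t - (N:ℝ) * x| := by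
            rw [abs_neg, abs_mul, abs_mul, abs_mul, abs_of_pos ht0, abs_of_pos hx0,
              abs_of_pos hfε0]
        _ ≤ 2 * f ε * t + 2 * f ε * x + f ε * (2 * x + 2 * t) := by
            gcongr
        _ = 4 * f ε * (x + t) := by ring
        _ ≤ δ := hδbound
    have h0 : |f x * t - f t * x| ≤ 0 :=
      le_of_forall_pos_le_add (fun δ hδ => by simpa using habs δ hδ)
    have := abs_nonpos_iff.mp h0
    linarith [this]
  obtain ⟨t₀, ht₀⟩ := hne
  constructor
  · intro x hx t ht
    rw [div_eq_div_iff (ne_of_gt (hΔ.1 _ hx)) (ne_of_gt (hΔ.1 _ ht))]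
    exact key x hx t ht
  · refine ⟨f t₀ / t₀, div_pos (hΛ.1 _ (hf.1.1 ht₀)) (hΔ.1 _ ht₀), fun x hx => ?_⟩
    have h := key x hx t₀ ht₀
    have ht₀0 : t₀ ≠ 0 := ne_of_gt (hΔ.1 _ ht₀)
    field_simp
    linarith [h]
end

section
/- Let β be a positive irrational number and let a, b, c, d be rationals with ad − bc ≠ 0 and cβ + d > 0, and suppose α = (aβ + b)/(cβ + d) is positive. Then α is irrational and (cβ + d)·Δ_α = Δ_β, i.e., the map t ↦ (cβ + d)·t is a bijection from Δ_α onto Δ_β (and hence, being multiplication by a positive constant, it preserves triangles, so it witnesses the equivalence of Δ_α and Δ_β). -/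
/-- If `β` is a positive irrational, `a, b, c, d ∈ ℚ` with `ad - bc ≠ 0` and
`cβ + d > 0`, and `α = (aβ + b)/(cβ + d)` is positive, then `α` is irrational
and `t ↦ (cβ + d)·t` is a bijection of `Δ_α` onto `Δ_β` witnessing the
equivalence of `Δ_α` and `Δ_β`. -/
theorem dset_scaling_bijection (β : ℝ) (hβ : 0 < β) (hβirr : Irrational β)
    (a b c d : ℚ) (hdet : a * d - b * c ≠ 0)
    (hden : 0 < (c : ℝ) * β + d)
    (α : ℝ) (hα : α = ((a : ℝ) * β + b) / ((c : ℝ) * β + d)) (hαpos : 0 < α) :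
    Irrational α ∧
    Set.BijOn (fun t => ((c : ℝ) * β + d) * t) (Dset α) (Dset β) ∧
    IsEquivWitness (Dset α) (Dset β) (fun t => ((c : ℝ) * β + d) * t) := by
  set D : ℝ := (c : ℝ) * β + d with hDdef
  have hD0 : D ≠ 0 := ne_of_gt hden
  have key : D * α = (a : ℝ) * β + b := by
    rw [hα]; field_simp
  have hdetR : ((a : ℝ) * d - b * c) ≠ 0 := by
    have : ((a * d - b * c : ℚ) : ℝ) ≠ 0 := by exact_mod_cast hdet
    push_cast at this; exact this
  -- irrationality
  have hirr : Irrational α := by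
    rw [Irrational]
    intro ⟨r, hr⟩
    have h1 : (r : ℝ) * D = (a : ℝ) * β + b := by rw [← hr] at key; linear_combination key
    have h2 : ((a : ℝ) - r * c) * β = (r : ℝ) * d - b := by
      rw [hDdef] at h1; ring_nf; ring_nf at h1; linarith
    by_cases hac : (a : ℝ) - r * c = 0
    · have hb : (r : ℝ) * d - b = 0 := by rw [hac] at h2; linarith
      apply hdetR
      have ha' : (a : ℝ) = r * c := by linarith
      have hb' : (b : ℝ) = r * d := by linarith
      rw [ha', hb']; ring
    · apply hβirr
      refine ⟨(r * d - b) / (a - r * c), ?_⟩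
      push_cast
      field_simp
      linarith [h2]
  -- forward map
  have hmap : ∀ t ∈ Dset α, D * t ∈ Dset β := by
    rintro t ⟨⟨p, q, hpq⟩, ht⟩
    refine ⟨⟨p * a + q * c, p * b + q * d, ?_⟩, by positivity⟩
    push_cast
    rw [hpq, mul_add, ← mul_assoc, mul_comm D (p:ℝ), mul_assoc, key, hDdef]
    ring
  -- surjectivity: inverse formula
  have hsurj : ∀ x ∈ Dset β, ∃ t ∈ Dset α, D * t = x := by
    rintro x ⟨⟨p, q, hpq⟩, hx⟩
    set e : ℚ := a * d - b * c
    refine ⟨x / D, ⟨⟨(p * d - q * c) / e, (q * a - p * b) / e, ?_⟩, by positivity⟩, by field_simp⟩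
    have hα' : α = ((a : ℝ) * β + b) / D := hα
    rw [hpq, hα']
    push_cast [e]
    have hdetR' : ((d:ℝ) * a - c * b) ≠ 0 := by intro h; apply hdetR; linarith
    field_simp
    rw [hDdef]
    ring
  have hbij : Set.BijOn (fun t => D * t) (Dset α) (Dset β) := by
    refine ⟨hmap, ?_, ?_⟩
    · intro s hs t ht hst
      simp only at hst
      exact mul_left_cancel₀ hD0 hst
    · intro x hx
      obtain ⟨t, ht, htx⟩ := hsurj x hx
      exact ⟨t, ht, htx⟩
  refine ⟨hirr, hbij, hbij, ?_⟩
  intro x hx y hy z hz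
  unfold IsTriangle
  simp only
  have hfx := hmap x hx; have hfy := hmap y hy; have hfz := hmap z hz
  constructor
  · rintro ⟨-, -, -, h1, h2⟩
    refine ⟨hfx, hfy, hfz, ?_, ?_⟩
    · rw [← mul_sub, abs_mul, abs_of_pos hden]
      exact (mul_le_mul_iff_right₀ hden).2 h1 |>.trans_eq rfl
    · rw [← mul_add]; exact (mul_le_mul_iff_right₀ hden).2 h2
  · rintro ⟨-, -, -, h1, h2⟩
    refine ⟨hx, hy, hz, ?_, ?_⟩
    · rw [← mul_sub, abs_mul, abs_of_pos hden] at h1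
      exact le_of_mul_le_mul_left h1 hden
    · rw [← mul_add] at h2
      exact le_of_mul_le_mul_left h2 hden
end

section
/- Let Δ be a nonempty distance value set. Then inf Δ = 0 if and only if Δ is dense in the open interval (0, sup Δ), i.e., for all real numbers a, b with 0 < a < b and a < sup Δ (interpreting sup Δ = +∞ when Δ is unbounded, and requiring b ≤ sup Δ when Δ is bounded), there exists x ∈ Δ with a < x < b. -/
/-- A nonempty distance value set has infimum `0` iff it is dense in
`(0, sup Δ)` (where `sup Δ = +∞` when `Δ` is unbounded, in which case the
constraints `a < sup Δ` and `b ≤ sup Δ` are vacuous). -/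
theorem dvs_inf_zero_iff_dense (Δ : Set ℝ) (hΔ : IsDVS Δ) (hne : Δ.Nonempty) :
    sInf Δ = 0 ↔
      ∀ a b : ℝ, 0 < a → a < b →
        (BddAbove Δ → a < sSup Δ ∧ b ≤ sSup Δ) →
        ∃ x ∈ Δ, a < x ∧ x < b := by
  have hbdd : BddBelow Δ := ⟨0, fun x hx => (hΔ.1 x hx).le⟩
  constructor
  · intro hinf a b ha hab hsup
    -- get a small element d < b - a
    obtain ⟨d, hdΔ, hd⟩ := Real.lt_sInf_add_pos hne (show (0:ℝ) < b - a by linarith)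
    rw [hinf, zero_add] at hd
    have hdpos : 0 < d := hΔ.1 d hdΔ
    -- key: multiples of d that stay ≤ b are in Δ
    have key : ∀ n : ℕ, ((n : ℝ) + 1) * d ≤ b → ((n : ℝ) + 1) * d ∈ Δ := by
      intro n
      induction n with
      | zero => intro _; simpa using hdΔ
      | succ n ih =>
        intro h
        have h1 : ((n : ℝ) + 1) * d ≤ b := by push_cast at h ⊢; nlinarith
        have hmem := ih h1
        obtain ⟨hb1, hub1⟩ := (hΔ.2 _ hmem d hdΔ)
        by_cases hB : BddAbove Δ
        · have hle : ((n : ℝ) + 1) * d + d ≤ sSup Δ := by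
            have hbs := (hsup hB).2
            push_cast at h; nlinarith
          have := hb1 hB
          rw [min_eq_left hle] at this
          convert this using 1
          push_cast; ring
        · have := hub1 hB
          convert this using 1
          push_cast; ring
    -- choose n = ⌊a/d⌋
    set k : ℕ := ⌊a / d⌋₊ with hk
    have h1 : a < ((k : ℝ) + 1) * d := by
      have := Nat.lt_floor_add_one (a / d)
      calc a = (a / d) * d := by field_simp
        _ < ((k : ℝ) + 1) * d := by
            apply mul_lt_mul_of_pos_right _ hdpos
            exact_mod_cast this
    have h2 : ((k : ℝ) + 1) * d < b := by
      have hfl : (k : ℝ) * d ≤ a := by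
        have := Nat.floor_le (show 0 ≤ a / d by positivity)
        calc (k : ℝ) * d ≤ (a / d) * d := mul_le_mul_of_nonneg_right this hdpos.le
          _ = a := by field_simp
      nlinarith
    exact ⟨((k : ℝ) + 1) * d, key k h2.le, h1, h2⟩
  · intro hdense
    refine le_antisymm ?_ (le_csInf hne fun x hx => (hΔ.1 x hx).le)
    by_contra hpos
    push_neg at hpos
    set m := sInf Δ with hm
    obtain ⟨y, hy⟩ := hne
    have hmy : m ≤ y := csInf_le hbdd hy
    obtain ⟨x, hxΔ, hx1, hx2⟩ := hdense (m / 2) m (by linarith) (by linarith)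
      (fun hB => ⟨lt_of_lt_of_le (by linarith : m / 2 < y) (le_csSup hB hy),
        le_trans hmy (le_csSup hB hy)⟩)
    exact absurd (csInf_le hbdd hxΔ) (not_le.mpr hx2)
end

section
/- Let Δ be a nonempty distance value set. The class of finite Δ-metric spaces has the amalgamation property: if A, B, C are finite Δ-metric spaces with A nonempty, and f : A → B and g : A → C are isometric embeddings, then there exist a finite Δ-metric space D and isometric embeddings r : B → D and s : C → D such that r ∘ f = s ∘ g. -/
open Classical in
/-- Truncated addition. -/
noncomputable def DSum (Δ : Set ℝ) (x y : ℝ) : ℝ :=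
  if BddAbove Δ then min (x + y) (sSup Δ) else x + y

section DSumLemmas

variable {Δ : Set ℝ}

lemma sSup_pos' (hΔ : IsDVS Δ) (hne : Δ.Nonempty) (hb : BddAbove Δ) : 0 < sSup Δ := by
  obtain ⟨z, hz⟩ := hne
  exact lt_of_lt_of_le (hΔ.1 z hz) (le_csSup hb hz)

lemma sSup_mem' (hΔ : IsDVS Δ) (hne : Δ.Nonempty) (hb : BddAbove Δ) : sSup Δ ∈ Δ := by
  have hM : 0 < sSup Δ := sSup_pos' hΔ hne hb
  obtain ⟨z, hz, hz2⟩ : ∃ z ∈ Δ, sSup Δ / 2 < z := by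
    rcases exists_lt_of_lt_csSup hne (half_lt_self hM) with ⟨z, hz, h⟩
    exact ⟨z, hz, h⟩
  have h := (hΔ.2 z hz z hz).1 hb
  have hzz : sSup Δ ≤ z + z := by linarith
  simpa [min_eq_right hzz] using h

lemma DSum_mem (hΔ : IsDVS Δ) {x y : ℝ} (hx : x ∈ Δ) (hy : y ∈ Δ) : DSum Δ x y ∈ Δ := by
  unfold DSum; split
  · exact (hΔ.2 x hx y hy).1 ‹_›
  · exact (hΔ.2 x hx y hy).2 ‹_›

lemma DSum_le_add {x y : ℝ} : DSum Δ x y ≤ x + y := by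
  unfold DSum; split
  · exact min_le_left _ _
  · exact le_rfl

lemma DSum_mono {x x' y y' : ℝ} (h1 : x ≤ x') (h2 : y ≤ y') :
    DSum Δ x y ≤ DSum Δ x' y' := by
  unfold DSum; split
  · exact min_le_min (by linarith) le_rfl
  · linarith

/-- lower bounds in `Δ ∪ {0}` transfer through truncation. -/
lemma le_DSum (hΔ : IsDVS Δ) (hne : Δ.Nonempty) {z x y : ℝ} (hz : z = 0 ∨ z ∈ Δ)
    (hxy : z ≤ x + y) (hx : 0 ≤ x) (hy : 0 ≤ y) : z ≤ DSum Δ x y := by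
  unfold DSum; split
  · rename_i hb
    refine le_min hxy ?_
    rcases hz with rfl | hz
    · exact (sSup_pos' hΔ hne hb).le
    · exact le_csSup hb hz
  · exact hxy

lemma le_DSum_add_DSum (hΔ : IsDVS Δ) (hne : Δ.Nonempty) {z x1 y1 x2 y2 : ℝ}
    (hz : z = 0 ∨ z ∈ Δ)
    (hxy : z ≤ x1 + y1 + (x2 + y2)) (hx1 : 0 ≤ x1) (hy1 : 0 ≤ y1)
    (hx2 : 0 ≤ x2) (hy2 : 0 ≤ y2) : z ≤ DSum Δ x1 y1 + DSum Δ x2 y2 := by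
  unfold DSum; split
  · rename_i hb
    have hzM : z ≤ sSup Δ := by
      rcases hz with rfl | hz
      · exact (sSup_pos' hΔ hne hb).le
      · exact le_csSup hb hz
    have hM := (sSup_pos' hΔ hne hb).le
    rcases le_or_gt (x1 + y1) (sSup Δ) with h1 | h1 <;>
      rcases le_or_gt (x2 + y2) (sSup Δ) with h2 | h2
    · rw [min_eq_left h1, min_eq_left h2]; linarith
    · rw [min_eq_left h1, min_eq_right h2.le]; linarith
    · rw [min_eq_right h1.le, min_eq_left h2]; linarith
    · rw [min_eq_right h1.le, min_eq_right h2.le]; linarith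
  · linarith

lemma DSum_add_left_le {u x y : ℝ} (hu : 0 ≤ u) : DSum Δ (u + x) y ≤ u + DSum Δ x y := by
  unfold DSum; split
  · rcases le_or_gt (x + y) (sSup Δ) with h | h
    · rw [min_eq_left h]
      exact (min_le_left _ _).trans (by linarith)
    · rw [min_eq_right h.le]
      exact (min_le_right _ _).trans (by linarith)
  · linarith

lemma DSum_add_right_le {u x y : ℝ} (hu : 0 ≤ u) : DSum Δ x (y + u) ≤ DSum Δ x y + u := by
  unfold DSum; split
  · rcases le_or_gt (x + y) (sSup Δ) with h | h
    · rw [min_eq_left h]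
      exact (min_le_left _ _).trans (by linarith)
    · rw [min_eq_right h.le]
      exact (min_le_right _ _).trans (by linarith)
  · linarith

lemma DSum_zero_left (hΔ : IsDVS Δ) (hne : Δ.Nonempty) {y : ℝ} (hy : y = 0 ∨ y ∈ Δ) :
    DSum Δ 0 y = y := by
  unfold DSum; split
  · rename_i hb
    rw [zero_add]
    rcases hy with rfl | hy
    · exact min_eq_left (sSup_pos' hΔ hne hb).le
    · exact min_eq_left (le_csSup hb hy)
  · exact zero_add y

lemma DSum_pos (hΔ : IsDVS Δ) (hne : Δ.Nonempty) {x y : ℝ} (hx : 0 ≤ x) (hy : 0 < y) :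
    0 < DSum Δ x y := by
  unfold DSum; split
  · exact lt_min (by linarith) (sSup_pos' hΔ hne ‹_›)
  · linarith

end DSumLemmas

section Amalg

variable {A B C : Type} [MetricSpace A] [MetricSpace B] [MetricSpace C]
  [Fintype A] [Nonempty A] {Δ : Set ℝ} (f : A → B) (g : A → C)

/-- Gluing distance between a point of `B` and a point of `C`. -/
noncomputable def amalgDist (Δ : Set ℝ) (f : A → B) (g : A → C) (b : B) (c : C) : ℝ :=
  Finset.univ.inf' Finset.univ_nonempty fun a => DSum Δ (dist b (f a)) (dist (g a) c)

variable (hΔ : IsDVS Δ) (hne : Δ.Nonempty)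
  (hB : ∀ x y : B, x ≠ y → dist x y ∈ Δ)
  (hC : ∀ x y : C, x ≠ y → dist x y ∈ Δ)
  (hfiso : ∀ x y : A, dist (f x) (f y) = dist x y)
  (hgiso : ∀ x y : A, dist (g x) (g y) = dist x y)

omit [MetricSpace A] in
lemma amalgDist_le (Δ : Set ℝ) (b : B) (c : C) (a : A) :
    amalgDist Δ f g b c ≤ DSum Δ (dist b (f a)) (dist (g a) c) :=
  Finset.inf'_le _ (Finset.mem_univ a)

lemma le_amalgDist (Δ : Set ℝ) {z : ℝ} (b : B) (c : C)
    (h : ∀ a : A, z ≤ DSum Δ (dist b (f a)) (dist (g a) c)) :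
    z ≤ amalgDist Δ f g b c :=
  Finset.le_inf' _ _ fun a _ => h a

lemma amalgDist_exists (Δ : Set ℝ) (b : B) (c : C) :
    ∃ a : A, amalgDist Δ f g b c = DSum Δ (dist b (f a)) (dist (g a) c) := by
  obtain ⟨a, _, h⟩ := Finset.exists_mem_eq_inf' (Finset.univ_nonempty)
    (fun a => DSum Δ (dist b (f a)) (dist (g a) c))
  exact ⟨a, h⟩

include hΔ hne in
lemma amalgDist_pos (b : B) (c : C) (hc : ∀ a : A, g a ≠ c) :
    0 < amalgDist Δ f g b c := by
  obtain ⟨a, ha⟩ := amalgDist_exists f g Δ b c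
  rw [ha]
  exact DSum_pos hΔ hne dist_nonneg (dist_pos.mpr (hc a))

include hΔ hne hB hC in
lemma amalgDist_mem (b : B) (c : C) (hc : ∀ a : A, g a ≠ c) :
    amalgDist Δ f g b c ∈ Δ := by
  obtain ⟨a, ha⟩ := amalgDist_exists f g Δ b c
  rw [ha]
  have hgc : dist (g a) c ∈ Δ := hC _ _ (hc a)
  by_cases hb : b = f a
  · subst hb
    rw [dist_self, DSum_zero_left hΔ hne (Or.inr hgc)]
    exact hgc
  · exact DSum_mem hΔ (hB _ _ hb) hgc

include hΔ hne hC hfiso hgiso in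
lemma amalgDist_apply (a : A) (c : C) :
    amalgDist Δ f g (f a) c = dist (g a) c := by
  refine le_antisymm ?_ ?_
  · have h := amalgDist_le f g Δ (f a) c a
    rwa [dist_self, DSum_zero_left hΔ hne] at h
    rcases eq_or_ne (g a) c with rfl | hne'
    · exact Or.inl (dist_self _)
    · exact Or.inr (hC _ _ hne')
  · refine le_amalgDist f g Δ _ _ fun a' => ?_
    refine le_DSum hΔ hne ?_ ?_ dist_nonneg dist_nonneg
    · rcases eq_or_ne (g a) c with rfl | hne'
      · exact Or.inl (dist_self _)
      · exact Or.inr (hC _ _ hne')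
    · calc dist (g a) c ≤ dist (g a) (g a') + dist (g a') c := dist_triangle _ _ _
        _ = dist (f a) (f a') + dist (g a') c := by rw [hgiso, hfiso]

-- triangle pieces
include hΔ hne hB hfiso hgiso in
lemma amalg_T1 (b b' : B) (c : C) :
    dist b b' ≤ amalgDist Δ f g b c + amalgDist Δ f g b' c := by
  obtain ⟨a1, h1⟩ := amalgDist_exists f g Δ b c
  obtain ⟨a2, h2⟩ := amalgDist_exists f g Δ b' c
  rw [h1, h2]
  refine le_DSum_add_DSum hΔ hne ?_ ?_ dist_nonneg dist_nonneg dist_nonneg dist_nonneg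
  · rcases eq_or_ne b b' with rfl | hne'
    · exact Or.inl (dist_self _)
    · exact Or.inr (hB _ _ hne')
  · have hgg : dist (g a1) (g a2) = dist (f a1) (f a2) := by rw [hgiso, hfiso]
    have h3 : dist (g a1) c + dist (g a2) c ≥ dist (g a1) (g a2) := by
      rw [dist_comm (g a2) c] at *
      have := dist_triangle (g a1) c (g a2)
      linarith [dist_triangle (g a1) c (g a2), dist_comm (g a2) c]
    have h4 := dist_triangle b (f a1) (f a2)
    have h5 := dist_triangle b (f a2) b'
    have h6 := dist_triangle (f a1) (f a2) b'
    calc dist b b' ≤ dist b (f a1) + dist (f a1) (f a2) + dist (f a2) b' :=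
          dist_triangle4 _ _ _ _
      _ = dist b (f a1) + dist (g a1) (g a2) + dist b' (f a2) := by
          rw [hgg, dist_comm (f a2) b']
      _ ≤ dist b (f a1) + (dist (g a1) c + dist (g a2) c) + dist b' (f a2) := by linarith
      _ = dist b (f a1) + dist (g a1) c + (dist b' (f a2) + dist (g a2) c) := by ring

include hΔ hne hC hfiso hgiso in
lemma amalg_T4 (b : B) (c c' : C) :
    dist c c' ≤ amalgDist Δ f g b c + amalgDist Δ f g b c' := by
  obtain ⟨a1, h1⟩ := amalgDist_exists f g Δ b c
  obtain ⟨a2, h2⟩ := amalgDist_exists f g Δ b c'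
  rw [h1, h2]
  refine le_DSum_add_DSum hΔ hne ?_ ?_ dist_nonneg dist_nonneg dist_nonneg dist_nonneg
  · rcases eq_or_ne c c' with rfl | hne'
    · exact Or.inl (dist_self _)
    · exact Or.inr (hC _ _ hne')
  · have hgg : dist (g a1) (g a2) = dist (f a1) (f a2) := by rw [hgiso, hfiso]
    have hff : dist (f a1) (f a2) ≤ dist b (f a1) + dist b (f a2) := by
      rw [dist_comm b (f a1)]; exact dist_triangle _ _ _
    calc dist c c' ≤ dist c (g a1) + dist (g a1) (g a2) + dist (g a2) c' :=
          dist_triangle4 _ _ _ _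
      _ = dist (g a1) c + dist (f a1) (f a2) + dist (g a2) c' := by
          rw [hgg, dist_comm c (g a1)]
      _ ≤ dist (g a1) c + (dist b (f a1) + dist b (f a2)) + dist (g a2) c' := by linarith
      _ = dist b (f a1) + dist (g a1) c + (dist b (f a2) + dist (g a2) c') := by ring

lemma amalg_T2 (b b' : B) (c : C) :
    amalgDist Δ f g b c ≤ dist b b' + amalgDist Δ f g b' c := by
  obtain ⟨a, ha⟩ := amalgDist_exists f g Δ b' c
  rw [ha]
  calc amalgDist Δ f g b c ≤ DSum Δ (dist b (f a)) (dist (g a) c) := amalgDist_le f g Δ b c a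
    _ ≤ DSum Δ (dist b b' + dist b' (f a)) (dist (g a) c) :=
        DSum_mono (dist_triangle _ _ _) le_rfl
    _ ≤ dist b b' + DSum Δ (dist b' (f a)) (dist (g a) c) := DSum_add_left_le dist_nonneg

lemma amalg_T3 (b : B) (c c' : C) :
    amalgDist Δ f g b c ≤ amalgDist Δ f g b c' + dist c' c := by
  obtain ⟨a, ha⟩ := amalgDist_exists f g Δ b c'
  rw [ha]
  calc amalgDist Δ f g b c ≤ DSum Δ (dist b (f a)) (dist (g a) c) := amalgDist_le f g Δ b c a
    _ ≤ DSum Δ (dist b (f a)) (dist (g a) c' + dist c' c) :=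
        DSum_mono le_rfl (dist_triangle _ _ _)
    _ ≤ DSum Δ (dist b (f a)) (dist (g a) c') + dist c' c := DSum_add_right_le dist_nonneg

end Amalg

noncomputable def amalgD {A B C : Type} [MetricSpace B] [MetricSpace C]
    [Fintype A] [Nonempty A] (Δ : Set ℝ) (f : A → B) (g : A → C) :
    (B ⊕ {c : C // c ∉ Set.range g}) → (B ⊕ {c : C // c ∉ Set.range g}) → ℝ
  | .inl b, .inl b' => dist b b'
  | .inl b, .inr c => amalgDist Δ f g b c.1
  | .inr c, .inl b => amalgDist Δ f g b c.1
  | .inr c, .inr c' => dist c.1 c'.1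


/-- The class of finite `Δ`-metric spaces has the amalgamation property: any two
isometric embeddings `f : A → B`, `g : A → C` of a nonempty finite `Δ`-metric
space `A` into finite `Δ`-metric spaces `B`, `C` can be amalgamated over `A` by
isometric embeddings `r : B → D`, `s : C → D` into a finite `Δ`-metric space `D`
with `r ∘ f = s ∘ g`. -/
theorem dvs_metric_amalgamation (Δ : Set ℝ) (hΔ : IsDVS Δ) (hΔne : Δ.Nonempty)
    (A B C : Type) [MetricSpace A] [MetricSpace B] [MetricSpace C]
    [Finite A] [Finite B] [Finite C] [Nonempty A]
    (hA : ∀ x y : A, x ≠ y → dist x y ∈ Δ)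
    (hB : ∀ x y : B, x ≠ y → dist x y ∈ Δ)
    (hC : ∀ x y : C, x ≠ y → dist x y ∈ Δ)
    (f : A → B) (g : A → C)
    (hf : Function.Injective f) (hg : Function.Injective g)
    (hfiso : ∀ x y : A, dist (f x) (f y) = dist x y)
    (hgiso : ∀ x y : A, dist (g x) (g y) = dist x y) :
    ∃ (D : Type) (mD : MetricSpace D), Finite D ∧
      (∀ x y : D, x ≠ y → mD.dist x y ∈ Δ) ∧
      ∃ (r : B → D) (s : C → D),
        Function.Injective r ∧ Function.Injective s ∧
        (∀ x y : B, mD.dist (r x) (r y) = dist x y) ∧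
        (∀ x y : C, mD.dist (s x) (s y) = dist x y) ∧
        r ∘ f = s ∘ g := by
  classical
  cases nonempty_fintype A
  set Cg := {c : C // c ∉ Set.range g} with hCg
  have hc : ∀ (c : Cg) (a : A), g a ≠ c.1 := fun c a h => c.2 ⟨a, h⟩
  set dD : (B ⊕ Cg) → (B ⊕ Cg) → ℝ := amalgD Δ f g with hdD
  have hself : ∀ x, dD x x = 0 := by
    rintro (b | c) <;> simp [hdD, amalgD]
  have hcomm : ∀ x y, dD x y = dD y x := by
    rintro (b | c) (b' | c') <;> simp [hdD, amalgD, dist_comm]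
  have htri : ∀ x y z, dD x z ≤ dD x y + dD y z := by
    rintro (b1 | c1) (b2 | c2) (b3 | c3) <;> simp only [hdD, amalgD]
    · exact dist_triangle _ _ _
    · exact amalg_T2 f g _ _ _
    · exact amalg_T1 f g hΔ hΔne hB hfiso hgiso _ _ _
    · exact amalg_T3 f g _ _ _
    · exact (amalg_T2 f g _ _ _).trans (by rw [dist_comm, add_comm])
    · exact amalg_T4 f g hΔ hΔne hC hfiso hgiso _ _ _
    · exact (amalg_T3 f g _ _ _).trans (by rw [dist_comm, add_comm])
    · exact dist_triangle c1.1 c2.1 c3.1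
  have hzero : ∀ x y, dD x y = 0 → x = y := by
    rintro (b | c) (b' | c') <;> simp only [hdD, amalgD]
    · intro h; rw [eq_of_dist_eq_zero h]
    · intro h
      exact absurd h (amalgDist_pos f g hΔ hΔne b c'.1 (hc c')).ne'
    · intro h
      exact absurd h (amalgDist_pos f g hΔ hΔne b' c.1 (hc c)).ne'
    · intro h; rw [Subtype.ext (eq_of_dist_eq_zero h)]
  let mD : MetricSpace (B ⊕ Cg) :=
    { dist := dD
      dist_self := hself
      dist_comm := hcomm
      dist_triangle := htri
      eq_of_dist_eq_zero := fun {x y} h => hzero x y h }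
  have hmd : ∀ x y, mD.dist x y = dD x y := fun _ _ => rfl
  refine ⟨B ⊕ Cg, mD, ?_, ?_, ?_⟩
  · infer_instance
  · rintro (b | c) (b' | c') hxy <;> rw [hmd] <;> simp only [hdD, amalgD]
    · exact hB _ _ (fun h => hxy (by rw [h]))
    · exact amalgDist_mem f g hΔ hΔne hB hC _ _ (hc c')
    · exact amalgDist_mem f g hΔ hΔne hB hC _ _ (hc c)
    · refine hC _ _ (fun h => hxy ?_)
      rw [Subtype.ext h]
  · have hs_exists : ∀ c : C, c ∈ Set.range g → ∃ a, g a = c := fun c hr => hr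
    classical
    set s : C → B ⊕ Cg := fun c =>
      if h : c ∈ Set.range g then Sum.inl (f h.choose)
      else Sum.inr ⟨c, h⟩ with hs
    have hs_inl : ∀ a : A, s (g a) = Sum.inl (f a) := by
      intro a
      have hr : (g a) ∈ Set.range g := ⟨a, rfl⟩
      have : hr.choose = a := hg hr.choose_spec
      simp only [hs, dif_pos hr, this]
    have hs_inr : ∀ c : C, ∀ h : c ∉ Set.range g, s c = Sum.inr ⟨c, h⟩ := by
      intro c h
      simp only [hs, dif_neg h]
    have hs_iso : ∀ x y : C, dD (s x) (s y) = dist x y := by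
      intro x y
      by_cases hx : x ∈ Set.range g <;> by_cases hy : y ∈ Set.range g
      · obtain ⟨a, rfl⟩ := hx
        obtain ⟨a', rfl⟩ := hy
        rw [hs_inl, hs_inl]
        show dist (f a) (f a') = dist (g a) (g a')
        rw [hfiso, hgiso]
      · obtain ⟨a, rfl⟩ := hx
        rw [hs_inl, hs_inr y hy]
        show amalgDist Δ f g (f a) y = dist (g a) y
        exact amalgDist_apply f g hΔ hΔne hC hfiso hgiso a y
      · obtain ⟨a, rfl⟩ := hy
        rw [hs_inl, hs_inr x hx]
        show amalgDist Δ f g (f a) x = dist x (g a)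
        rw [dist_comm x (g a)]
        exact amalgDist_apply f g hΔ hΔne hC hfiso hgiso a x
      · rw [hs_inr x hx, hs_inr y hy]
        rfl
    refine ⟨Sum.inl, s, ?_, ?_, ?_, ?_, ?_⟩
    · intro x y h; exact Sum.inl_injective h
    · intro x y h
      have h0 : dD (s x) (s y) = 0 := by rw [h]; exact hself _
      rw [hs_iso] at h0
      exact eq_of_dist_eq_zero h0
    · intro x y; rfl
    · exact hs_iso
    · funext a
      show Sum.inl (f a) = s (g a)
      rw [hs_inl]
end
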